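/- arXiv:2506.07832 — 2 statements merged into one kernel-verified Lean document; each statement's English description precedes it below -/
import Mathlib

section
/- Monotone Convergence Theorem for compact-line Kurzweil–Stieltjes integrals: let K be a compact line and G : K → ℝ a nondecreasing, positive, amenable function. Let (f_m) be a monotone sequence of G-integrable functions converging pointwise G-almost everywhere to f : K → ℝ. If (∫_K f_m dG)_m converges in ℝ, then f is G-integrable and lim_m ∫_K f_m dG = ∫_K f dG. -/
open Set Filter MeasureTheory

/-- A tagged partition of the interval `[a,b]` in a linear order `K`. -/
structure TaggedPartition (K : Type*) [LinearOrder K] (a b : K) where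
  n : ℕ
  x : ℕ → K
  t : ℕ → K
  x_zero : x 0 = a
  x_last : x n = b
  mono : ∀ i < n, x i ≤ x (i + 1)
  tag_mem : ∀ i < n, t (i + 1) ∈ Set.Icc (x i) (x (i + 1))

/-- A gauge on the interval `[a,b]` of `K`: each point of `[a,b]` is assigned a
relatively open subinterval of `[a,b]` containing it. -/
def IsGauge (K : Type*) [LinearOrder K] [TopologicalSpace K] (a b : K) (δ : K → Set K) : Prop :=
  ∀ x ∈ Set.Icc a b, x ∈ δ x ∧ (δ x).OrdConnected ∧ ∃ U, IsOpen U ∧ δ x = U ∩ Set.Icc a b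

/-- A tagged partition is `δ`-fine when `(x_{i-1}, x_i] ⊆ δ(t_i)` for all `i`. -/
def TaggedPartition.IsFine {K : Type*} [LinearOrder K] {a b : K}
    (P : TaggedPartition K a b) (δ : K → Set K) : Prop :=
  ∀ i < P.n, Set.Ioc (P.x i) (P.x (i + 1)) ⊆ δ (P.t (i + 1))

/-- The Riemann sum `S(f,G,P) = f(a)G(a) + Σ f(t_i)(G(x_i) - G(x_{i-1}))`. -/
noncomputable def riemannSum {K : Type*} [LinearOrder K] {a b : K}
    (f G : K → ℝ) (P : TaggedPartition K a b) : ℝ :=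
  f a * G a + ∑ i ∈ Finset.range P.n, f (P.t (i + 1)) * (G (P.x (i + 1)) - G (P.x i))

/-- `f` has Kurzweil–Stieltjes integral `A` with respect to `G` over `[a,b]`. -/
def HasIntegral {K : Type*} [LinearOrder K] [TopologicalSpace K]
    (f G : K → ℝ) (a b : K) (A : ℝ) : Prop :=
  ∀ ε : ℝ, 0 < ε → ∃ δ : K → Set K, IsGauge K a b δ ∧
    ∀ P : TaggedPartition K a b, P.IsFine δ → |riemannSum f G P - A| < ε

/-- `G` is amenable: right-continuous everywhere, and regulated (left limits exist at
left-dense points, right limits at right-dense points). -/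
def Amenable {K : Type*} [LinearOrder K] [TopologicalSpace K] [BoundedOrder K]
    (G : K → ℝ) : Prop :=
  (∀ x : K, ContinuousWithinAt G (Set.Ici x) x) ∧
  (∀ x : K, x ≠ ⊥ → (¬ ∃ y, y ⋖ x) → ∃ l, Filter.Tendsto G (nhdsWithin x (Set.Iio x)) (nhds l)) ∧
  (∀ x : K, x ≠ ⊤ → (¬ ∃ y, x ⋖ y) → ∃ l, Filter.Tendsto G (nhdsWithin x (Set.Ioi x)) (nhds l))

open Classical in
/-- `L_G(x)`: `0` at the least element, `G` of the immediate predecessor if `x` is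
left-isolated, and the left limit of `G` at `x` if `x` is left-dense. -/
noncomputable def Lfun {K : Type*} [LinearOrder K] [TopologicalSpace K] [BoundedOrder K]
    (G : K → ℝ) (x : K) : ℝ :=
  if x = ⊥ then 0
  else if h : ∃ y, y ⋖ x then G h.choose
  else Function.leftLim G x

/-- The set of variation sums of `G` over divisions of `[a,b]`. -/
def varSums {K : Type*} [LinearOrder K] (G : K → ℝ) (a b : K) : Set ℝ :=
  {v | ∃ (n : ℕ) (x : ℕ → K), x 0 = a ∧ x n = b ∧ (∀ i < n, x i ≤ x (i + 1)) ∧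
        v = ∑ i ∈ Finset.range n, |G (x (i + 1)) - G (x i)|}

/-- `S` is null for the outer measure induced by `μ` via covers by countably many
open intervals. -/
def GNull {K : Type*} [LinearOrder K] [TopologicalSpace K] [MeasurableSpace K]
    (μ : MeasureTheory.Measure K) (S : Set K) : Prop :=
  ∀ ε : ℝ, 0 < ε → ∃ I : ℕ → Set K, (∀ n, IsOpen (I n) ∧ (I n).OrdConnected) ∧
    S ⊆ ⋃ n, I n ∧ ∑' n, μ (I n) < ENNReal.ofReal ε

section Basics

variable {K : Type*} [LinearOrder K] {a b c : K}

namespace TaggedPartition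

theorem x_mono (P : TaggedPartition K a b) : ∀ {i j : ℕ}, i ≤ j → j ≤ P.n → P.x i ≤ P.x j := by
  intro i j hij hj
  induction j with
  | zero => simp_all
  | succ j ih =>
    rcases Nat.eq_or_lt_of_le hij with rfl | h
    · exact le_refl _
    · exact le_trans (ih (Nat.lt_succ_iff.mp h) (le_trans (Nat.le_succ _) hj))
        (P.mono j (Nat.lt_of_succ_le hj))

theorem x_mem (P : TaggedPartition K a b) {i : ℕ} (hi : i ≤ P.n) : P.x i ∈ Set.Icc a b := by
  constructor
  · conv_lhs => rw [← P.x_zero]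
    exact P.x_mono (Nat.zero_le _) hi
  · conv_rhs => rw [← P.x_last]
    exact P.x_mono hi (le_refl _)

theorem le (P : TaggedPartition K a b) : a ≤ b :=
  P.x_zero ▸ (P.x_mem (Nat.zero_le _)).2

theorem tag_mem' (P : TaggedPartition K a b) {i : ℕ} (hi : i < P.n) :
    P.t (i + 1) ∈ Set.Icc a b :=
  ⟨le_trans (P.x_mem (le_of_lt hi)).1 (P.tag_mem i hi).1,
   le_trans (P.tag_mem i hi).2 (P.x_mem hi).2⟩

/-- The trivial partition of `[a,a]`. -/
def refl (a : K) : TaggedPartition K a a where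
  n := 0
  x := fun _ => a
  t := fun _ => a
  x_zero := rfl
  x_last := rfl
  mono := by simp
  tag_mem := by simp

theorem refl_isFine (δ : K → Set K) : (refl a).IsFine δ := by
  intro i hi; simp [refl] at hi

/-- One-interval tagged partition. -/
def single (a b t : K) (hab : a ≤ b) (ht : t ∈ Set.Icc a b) : TaggedPartition K a b where
  n := 1
  x := fun i => if i = 0 then a else b
  t := fun _ => t
  x_zero := rfl
  x_last := rfl
  mono := by intro i hi; interval_cases i; simpa using hab
  tag_mem := by intro i hi; interval_cases i; simpa using ht

section Append

variable (P : TaggedPartition K a b) (Q : TaggedPartition K b c)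

/-- Division points of the appended partition. -/
def appX (i : ℕ) : K := if i ≤ P.n then P.x i else Q.x (i - P.n)

/-- Tags of the appended partition. -/
def appT (i : ℕ) : K := if i ≤ P.n then P.t i else Q.t (i - P.n)

theorem appX_le {i : ℕ} (h : i ≤ P.n) : appX P Q i = P.x i := if_pos h

theorem appX_ge {i : ℕ} (h : P.n ≤ i) : appX P Q i = Q.x (i - P.n) := by
  rcases Nat.eq_or_lt_of_le h with rfl | h'
  · simp [appX, P.x_last, Q.x_zero]
  · exact if_neg (by omega)

theorem appT_gt {i : ℕ} (h : P.n < i) : appT P Q i = Q.t (i - P.n) := if_neg (by omega)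

theorem appT_le {i : ℕ} (h : i ≤ P.n) : appT P Q i = P.t i := if_pos h

/-- Append two adjacent tagged partitions. -/
def append : TaggedPartition K a c where
  n := P.n + Q.n
  x := appX P Q
  t := appT P Q
  x_zero := by rw [appX_le P Q (Nat.zero_le _), P.x_zero]
  x_last := by rw [appX_ge P Q (by omega)]; simpa using Q.x_last
  mono := by
    intro i hi
    rcases lt_or_ge i P.n with h | h
    · rw [appX_le P Q h.le, appX_le P Q h]
      exact P.mono i h
    · rw [appX_ge P Q h, appX_ge P Q (by omega)]
      have h3 : i + 1 - P.n = (i - P.n) + 1 := by omega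
      rw [h3]
      exact Q.mono (i - P.n) (by omega)
  tag_mem := by
    intro i hi
    rcases lt_or_ge i P.n with h | h
    · rw [appT_le P Q h, appX_le P Q h.le, appX_le P Q h]
      exact P.tag_mem i h
    · rw [appT_gt P Q (by omega), appX_ge P Q h, appX_ge P Q (by omega)]
      have h3 : i + 1 - P.n = (i - P.n) + 1 := by omega
      rw [h3]
      exact Q.tag_mem (i - P.n) (by omega)

theorem append_isFine {δ : K → Set K} (hP : P.IsFine δ) (hQ : Q.IsFine δ) :
    (append P Q).IsFine δ := by
  intro i hi
  replace hi : i < P.n + Q.n := hi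
  rcases lt_or_ge i P.n with h | h
  · show Set.Ioc (appX P Q i) (appX P Q (i+1)) ⊆ δ (appT P Q (i+1))
    rw [appT_le P Q h, appX_le P Q h.le, appX_le P Q h]
    exact hP i h
  · show Set.Ioc (appX P Q i) (appX P Q (i+1)) ⊆ δ (appT P Q (i+1))
    rw [appT_gt P Q (by omega), appX_ge P Q h, appX_ge P Q (by omega)]
    have h3 : i + 1 - P.n = (i - P.n) + 1 := by omega
    rw [h3]
    exact hQ (i - P.n) (by omega : i - P.n < Q.n)

theorem riemannSum_append (f G : K → ℝ) :
    riemannSum f G (append P Q) = riemannSum f G P + (riemannSum f G Q - f b * G b) := by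
  unfold riemannSum
  show f a * G a + ∑ i ∈ Finset.range (P.n + Q.n),
      f (appT P Q (i+1)) * (G (appX P Q (i+1)) - G (appX P Q i)) = _
  rw [Finset.sum_range_add]
  have h1 : ∀ i ∈ Finset.range P.n,
      f (appT P Q (i+1)) * (G (appX P Q (i+1)) - G (appX P Q i))
        = f (P.t (i+1)) * (G (P.x (i+1)) - G (P.x i)) := by
    intro i hi
    simp only [Finset.mem_range] at hi
    rw [appT_le P Q hi, appX_le P Q hi.le, appX_le P Q hi]
  have h2 : ∀ i ∈ Finset.range Q.n,
      f (appT P Q (P.n + i + 1)) * (G (appX P Q (P.n + i + 1)) - G (appX P Q (P.n + i)))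
        = f (Q.t (i+1)) * (G (Q.x (i+1)) - G (Q.x i)) := by
    intro i hi
    rw [appT_gt P Q (i := P.n + i + 1) (by omega), appX_ge P Q (i := P.n + i + 1) (by omega),
      appX_ge P Q (i := P.n + i) (by omega)]
    have e1 : P.n + i + 1 - P.n = i + 1 := by omega
    have e2 : P.n + i - P.n = i := by omega
    rw [e1, e2]
  rw [Finset.sum_congr rfl h1, Finset.sum_congr rfl h2]
  ring

end Append

end TaggedPartition

end Basics
section Gauges

variable {K : Type*} [LinearOrder K] [TopologicalSpace K] {a b c : K}

theorem IsGauge.mem {δ : K → Set K} (h : IsGauge K a b δ) {x : K} (hx : x ∈ Set.Icc a b) :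
    x ∈ δ x := (h x hx).1

theorem IsGauge.inter {δ₁ δ₂ : K → Set K} (h₁ : IsGauge K a b δ₁) (h₂ : IsGauge K a b δ₂) :
    IsGauge K a b (fun x => δ₁ x ∩ δ₂ x) := by
  intro x hx
  obtain ⟨m₁, o₁, U₁, hU₁, he₁⟩ := h₁ x hx
  obtain ⟨m₂, o₂, U₂, hU₂, he₂⟩ := h₂ x hx
  refine ⟨⟨m₁, m₂⟩, o₁.inter o₂, U₁ ∩ U₂, hU₁.inter hU₂, ?_⟩
  show δ₁ x ∩ δ₂ x = _
  rw [he₁, he₂]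
  ext y; simp; tauto

theorem IsGauge.restrict {δ : K → Set K} (h : IsGauge K a b δ) {a' b' : K}
    (ha : a ≤ a') (hb : b' ≤ b) :
    IsGauge K a' b' (fun x => δ x ∩ Set.Icc a' b') := by
  intro x hx
  have hx' : x ∈ Set.Icc a b := ⟨le_trans ha hx.1, le_trans hx.2 hb⟩
  obtain ⟨m, o, U, hU, he⟩ := h x hx'
  refine ⟨⟨m, hx⟩, o.inter Set.ordConnected_Icc, U, hU, ?_⟩
  show δ x ∩ Set.Icc a' b' = _
  rw [he]
  ext y
  simp only [Set.mem_inter_iff, Set.mem_Icc]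
  constructor
  · tauto
  · rintro ⟨hy, h1, h2⟩
    exact ⟨⟨hy, le_trans ha h1, le_trans h2 hb⟩, h1, h2⟩

theorem TaggedPartition.IsFine.mono' {δ δ' : K → Set K} {P : TaggedPartition K a b}
    (h : P.IsFine δ) (hle : ∀ x, δ x ⊆ δ' x) : P.IsFine δ' :=
  fun i hi => Set.Subset.trans (h i hi) (hle _)

/-- A finite intersection of gauges. -/
theorem IsGauge.iInter_finset {δ : ℕ → K → Set K} (h : ∀ m, IsGauge K a b (δ m)) (s : Finset ℕ)
    (hs : s.Nonempty) : IsGauge K a b (fun x => ⋂ m ∈ s, δ m x) := by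
  classical
  induction hs using Finset.Nonempty.cons_induction with
  | singleton m => simpa using h m
  | cons m s hm hs ih =>
    have : (fun x => ⋂ j ∈ Finset.cons m s hm, δ j x)
        = fun x => δ m x ∩ ⋂ j ∈ s, δ j x := by
      funext x; simp
    rw [this]
    exact (h m).inter ih

end Gauges

section Sums

variable {K : Type*} [LinearOrder K] {a b : K} (f G : K → ℝ)

theorem riemannSum_refl : riemannSum f G (TaggedPartition.refl a) = f a * G a := by
  simp [riemannSum, TaggedPartition.refl]

theorem riemannSum_single {t : K} (hab : a ≤ b) (ht : t ∈ Set.Icc a b) :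
    riemannSum f G (TaggedPartition.single a b t hab ht)
      = f a * G a + f t * (G b - G a) := by
  simp [riemannSum, TaggedPartition.single]

theorem riemannSum_neg (P : TaggedPartition K a b) :
    riemannSum (fun x => - f x) G P = - riemannSum f G P := by
  unfold riemannSum
  rw [neg_add, ← Finset.sum_neg_distrib]
  congr 1
  · ring
  · exact Finset.sum_congr rfl (fun i _ => by ring)

theorem riemannSum_le {f f' : K → ℝ} (hle : ∀ x, f x ≤ f' x) (hG : Monotone G)
    (hGpos : ∀ x, 0 ≤ G x) (P : TaggedPartition K a b) :
    riemannSum f G P ≤ riemannSum f' G P := by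
  unfold riemannSum
  have h1 : f a * G a ≤ f' a * G a := mul_le_mul_of_nonneg_right (hle a) (hGpos a)
  have h2 : ∀ i ∈ Finset.range P.n,
      f (P.t (i+1)) * (G (P.x (i+1)) - G (P.x i)) ≤ f' (P.t (i+1)) * (G (P.x (i+1)) - G (P.x i)) := by
    intro i hi
    simp only [Finset.mem_range] at hi
    exact mul_le_mul_of_nonneg_right (hle _) (sub_nonneg.mpr (hG (P.mono i hi)))
  exact add_le_add h1 (Finset.sum_le_sum h2)

end Sums
section Cousin

variable {K : Type*} [LinearOrder K] [TopologicalSpace K] [OrderTopology K] [CompactSpace K]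

/-- Cousin's lemma: every gauge on `[a,b]` admits a fine tagged partition. -/
theorem cousin {a b : K} (hab : a ≤ b) {δ : K → Set K} (hδ : IsGauge K a b δ) :
    ∃ P : TaggedPartition K a b, P.IsFine δ := by
  classical
  set s : Set K := {y | y ∈ Set.Icc a b ∧ ∃ P : TaggedPartition K a y, P.IsFine δ} with hs
  have hane : a ∈ s := ⟨⟨le_refl a, hab⟩, TaggedPartition.refl a, TaggedPartition.refl_isFine δ⟩
  have hne : s.Nonempty := ⟨a, hane⟩
  -- the closure of s is compact, take its greatest element c
  obtain ⟨c, hcs, hcub⟩ := (IsClosed.isCompact isClosed_closure).exists_isGreatest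
    (hne.mono subset_closure)
  have hcub' : c ∈ upperBounds s := (upperBounds_closure s ▸ hcub : c ∈ upperBounds s)
  have hcIcc : c ∈ Set.Icc a b := by
    constructor
    · exact hcub' hane
    · have : closure s ⊆ Set.Icc a b := by
        apply closure_minimal _ isClosed_Icc
        intro y hy; exact hy.1
      exact (this hcs).2
  obtain ⟨hcδ, hcoc, U, hU, hUe⟩ := hδ c hcIcc
  have hUc : c ∈ U := by rw [hUe] at hcδ; exact hcδ.1
  -- step 1 : c ∈ s
  have hcs' : c ∈ s := by
    obtain ⟨y, hyU, hys⟩ : ∃ y ∈ U, y ∈ s := by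
      have := mem_closure_iff.mp hcs U hU hUc
      obtain ⟨y, hy1, hy2⟩ := this
      exact ⟨y, hy1, hy2⟩
    have hyc : y ≤ c := hcub' hys
    obtain ⟨⟨hay, hyb⟩, P, hP⟩ := hys
    refine ⟨hcIcc, P.append (TaggedPartition.single y c c hyc ⟨hyc, le_refl c⟩), ?_⟩
    apply TaggedPartition.append_isFine P _ hP
    intro i hi
    replace hi : i < 1 := hi
    interval_cases i
    intro z hz
    simp only [TaggedPartition.single] at hz
    replace hz : z ∈ Set.Ioc y c := hz
    -- z between y and c, both in δ c
    have hyδ : y ∈ δ c := by rw [hUe]; exact ⟨hyU, hay, le_trans hyc hcIcc.2⟩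
    exact hcoc.out hyδ hcδ ⟨hz.1.le, hz.2⟩
  -- step 2 : c = b
  rcases eq_or_lt_of_le hcIcc.2 with hcb | hcb
  · subst hcb
    obtain ⟨_, P, hP⟩ := hcs'
    exact ⟨P, hP⟩
  -- c < b : we find z > c reachable, contradiction
  exfalso
  obtain ⟨⟨_, P, hP⟩⟩ := And.intro hcs' trivial
  have hext : ∀ z ∈ Set.Ioc c b, ∀ τ ∈ Set.Icc c z, Set.Ioc c z ⊆ δ τ → False := by
    intro z hz τ hτ hsub
    have hzs : z ∈ s := by
      refine ⟨⟨le_trans hcIcc.1 hz.1.le, hz.2⟩, P.append (TaggedPartition.single c z τ hz.1.le hτ), ?_⟩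
      apply TaggedPartition.append_isFine P _ hP
      intro i hi
      replace hi : i < 1 := hi
      interval_cases i
      intro w hw
      replace hw : w ∈ Set.Ioc c z := hw
      exact hsub hw
    exact absurd (hcub' hzs) (not_le.mpr hz.1)
  -- infimum of Ioc c b
  have hIocne : (Set.Ioc c b).Nonempty := ⟨b, hcb, le_refl b⟩
  obtain ⟨d, hdcl, hdlb⟩ := (IsClosed.isCompact isClosed_closure).exists_isLeast
    (hIocne.mono subset_closure)
  have hdlb' : d ∈ lowerBounds (Set.Ioc c b) := fun y hy => hdlb (subset_closure hy)
  have hdIcc : d ∈ Set.Icc c b := by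
    have : closure (Set.Ioc c b) ⊆ Set.Icc c b := closure_minimal Set.Ioc_subset_Icc_self isClosed_Icc
    exact this hdcl
  rcases eq_or_lt_of_le hdIcc.1 with hdc | hdc
  · -- d = c : c in closure of Ioc c b, so U meets Ioc c b
    subst hdc
    obtain ⟨z, hzU, hz⟩ := mem_closure_iff.mp hdcl U hU hUc
    refine hext z hz c ⟨le_refl c, hz.1.le⟩ ?_
    intro w hw
    have hzδ : z ∈ δ c := by
      rw [hUe]; exact ⟨hzU, le_trans hcIcc.1 hz.1.le, hz.2⟩
    exact hcoc.out hcδ hzδ ⟨hw.1.le, hw.2⟩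
  · -- c < d : Ioc c d = {d}
    refine hext d ⟨hdc, hdIcc.2⟩ d ⟨hdc.le, le_refl d⟩ ?_
    intro w hw
    have hwd : w = d := le_antisymm hw.2 (by
      by_contra hlt
      push_neg at hlt
      exact absurd (hdlb' ⟨hw.1, le_trans hw.2 hdIcc.2⟩) (not_le.mpr hlt))
    rw [hwd]
    exact (hδ d ⟨le_trans hcIcc.1 hdIcc.1, hdIcc.2⟩).1

end Cousin
section IntegralBasics

variable {K : Type*} [LinearOrder K] [TopologicalSpace K] [OrderTopology K] [CompactSpace K]
variable {f G : K → ℝ} {a b c : K}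

theorem hasIntegral_unique (hab : a ≤ b) {A A' : ℝ}
    (h : HasIntegral f G a b A) (h' : HasIntegral f G a b A') : A = A' := by
  by_contra hne
  have hε : 0 < |A - A'| / 2 := by
    have := abs_pos.mpr (sub_ne_zero.mpr hne); linarith
  obtain ⟨δ₁, hδ₁, h1⟩ := h _ hε
  obtain ⟨δ₂, hδ₂, h2⟩ := h' _ hε
  obtain ⟨P, hP⟩ := cousin hab (hδ₁.inter hδ₂)
  have e1 := h1 P (hP.mono' (fun x => Set.inter_subset_left))
  have e2 := h2 P (hP.mono' (fun x => Set.inter_subset_right))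
  have : |A - A'| < |A - A'| := by
    calc |A - A'| ≤ |A - riemannSum f G P| + |riemannSum f G P - A'| := abs_sub_le _ _ _
      _ = |riemannSum f G P - A| + |riemannSum f G P - A'| := by rw [abs_sub_comm]
      _ < |A - A'| / 2 + |A - A'| / 2 := add_lt_add e1 e2
      _ = |A - A'| := by ring
  exact lt_irrefl _ this

/-- Every partition of a degenerate interval has trivial Riemann sum. -/
theorem riemannSum_degenerate (f G : K → ℝ) (P : TaggedPartition K a a) :
    riemannSum f G P = f a * G a := by
  have hx : ∀ i ≤ P.n, P.x i = a := by
    intro i hi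
    have := P.x_mem hi
    simpa [Set.Icc_self, Set.mem_singleton_iff] using this
  unfold riemannSum
  rw [Finset.sum_eq_zero, add_zero]
  intro i hi
  simp only [Finset.mem_range] at hi
  rw [hx (i+1) hi, hx i hi.le]
  ring

theorem hasIntegral_degenerate (f G : K → ℝ) (a : K) : HasIntegral f G a a (f a * G a) := by
  intro ε hε
  refine ⟨fun _ => Set.Icc a a, ?_, ?_⟩
  · intro x hx
    refine ⟨hx, Set.ordConnected_Icc, Set.univ, isOpen_univ, by simp⟩
  · intro P _
    rw [riemannSum_degenerate]
    simpa using hε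

theorem HasIntegral.neg {A : ℝ} (h : HasIntegral f G a b A) :
    HasIntegral (fun x => - f x) G a b (-A) := by
  intro ε hε
  obtain ⟨δ, hδ, hP⟩ := h ε hε
  refine ⟨δ, hδ, fun P hPf => ?_⟩
  rw [riemannSum_neg]
  have := hP P hPf
  rw [show -riemannSum f G P - -A = -(riemannSum f G P - A) by ring, abs_neg]
  exact this

/-- Cauchy criterion gives existence. -/
theorem hasIntegral_of_cauchy (hab : a ≤ b)
    (H : ∀ ε : ℝ, 0 < ε → ∃ δ : K → Set K, IsGauge K a b δ ∧
      ∀ P Q : TaggedPartition K a b, P.IsFine δ → Q.IsFine δ →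
        |riemannSum f G P - riemannSum f G Q| ≤ ε) :
    ∃ A, HasIntegral f G a b A := by
  classical
  -- choose gauges
  have Hn : ∀ n : ℕ, ∃ δ : K → Set K, IsGauge K a b δ ∧
      ∀ P Q : TaggedPartition K a b, P.IsFine δ → Q.IsFine δ →
        |riemannSum f G P - riemannSum f G Q| ≤ 1 / (n + 1) := by
    intro n
    exact H (1 / (n+1)) (by positivity)
  choose δ hδ hδ2 using Hn
  -- nested gauges
  set δ' : ℕ → K → Set K := fun n x => ⋂ m ∈ Finset.range (n+1), δ m x with hδ'
  have hδ'g : ∀ n, IsGauge K a b (δ' n) := by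
    intro n
    exact IsGauge.iInter_finset hδ (Finset.range (n+1)) ⟨0, by simp⟩
  have hδ'sub : ∀ m n, m ≤ n → ∀ x, δ' n x ⊆ δ m x := by
    intro m n hmn x
    apply Set.biInter_subset_of_mem
    exact Finset.mem_range.mpr (by omega)
  have hPn : ∀ n : ℕ, ∃ P : TaggedPartition K a b, P.IsFine (δ' n) := fun n =>
    cousin hab (hδ'g n)
  choose P hP using hPn
  set S : ℕ → ℝ := fun n => riemannSum f G (P n) with hS
  have hcau : CauchySeq S := by
    rw [Metric.cauchySeq_iff']
    intro ε hε
    obtain ⟨N, hN⟩ := exists_nat_gt (1 / ε)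
    refine ⟨N, fun n hn => ?_⟩
    have h1 : (P n).IsFine (δ N) := (hP n).mono' (hδ'sub N n hn)
    have h2 : (P N).IsFine (δ N) := (hP N).mono' (hδ'sub N N (le_refl _))
    have := hδ2 N (P n) (P N) h1 h2
    rw [Real.dist_eq]
    have hlt : 1 / ((N : ℝ) + 1) < ε := by
      rw [div_lt_iff₀ (by positivity)]
      rw [div_lt_iff₀ hε] at hN
      nlinarith
    exact lt_of_le_of_lt this hlt
  obtain ⟨A, hA⟩ := cauchySeq_tendsto_of_complete hcau
  refine ⟨A, ?_⟩
  intro ε hε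
  -- choose n with 1/(n+1) < ε/2 and |S n - A| < ε/2
  obtain ⟨N₁, hN₁⟩ := exists_nat_gt (2 / ε)
  obtain ⟨N₂, hN₂⟩ := (Metric.tendsto_atTop.mp hA) (ε/2) (by linarith)
  set N := max N₁ N₂ with hN
  refine ⟨δ' N, hδ'g N, fun Q hQ => ?_⟩
  have h1 : Q.IsFine (δ N) := hQ.mono' (hδ'sub N N (le_refl _))
  have h2 : (P N).IsFine (δ N) := (hP N).mono' (hδ'sub N N (le_refl _))
  have key := hδ2 N Q (P N) h1 h2
  have hSA : |S N - A| < ε/2 := by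
    have := hN₂ N (le_max_right _ _)
    rwa [Real.dist_eq] at this
  have hlt : 1 / ((N : ℝ) + 1) < ε/2 := by
    rw [div_lt_iff₀ (by positivity)]
    have hN₁' : (2 : ℝ) / ε < N₁ := hN₁
    have : (N₁ : ℝ) ≤ N := by exact_mod_cast Nat.cast_le.mpr (le_max_left _ _)
    rw [div_lt_iff₀ hε] at hN₁'
    nlinarith
  calc |riemannSum f G Q - A| ≤ |riemannSum f G Q - S N| + |S N - A| := abs_sub_le _ _ _
    _ < ε/2 + ε/2 := add_lt_add_of_le_of_lt (le_trans key hlt.le) hSA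
    _ = ε := by ring

end IntegralBasics
section SubIntervals

variable {K : Type*} [LinearOrder K] [TopologicalSpace K] [OrderTopology K] [CompactSpace K]
variable {f f' G : K → ℝ} {a b c : K}

theorem HasIntegral.cauchy {A : ℝ} (h : HasIntegral f G a b A) :
    ∀ ε : ℝ, 0 < ε → ∃ δ : K → Set K, IsGauge K a b δ ∧
      ∀ P Q : TaggedPartition K a b, P.IsFine δ → Q.IsFine δ →
        |riemannSum f G P - riemannSum f G Q| ≤ ε := by
  intro ε hε
  obtain ⟨δ, hδ, hP⟩ := h (ε/2) (by linarith)
  refine ⟨δ, hδ, fun P Q hPf hQf => ?_⟩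
  have := abs_sub_le (riemannSum f G P) A (riemannSum f G Q)
  rw [abs_sub_comm A] at this
  linarith [hP P hPf, hP Q hQf]

/-- Integrability passes to the left subinterval `[a,c]`. -/
theorem exists_hasIntegral_left (hex : ∃ A, HasIntegral f G a b A) (hc : c ∈ Set.Icc a b) :
    ∃ A₁, HasIntegral f G a c A₁ := by
  obtain ⟨A, hA⟩ := hex
  apply hasIntegral_of_cauchy hc.1
  intro ε hε
  obtain ⟨δ, hδ, hcau⟩ := hA.cauchy ε hε
  obtain ⟨Q₂, hQ₂⟩ := cousin hc.2 (hδ.restrict hc.1 (le_refl b))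
  refine ⟨fun x => δ x ∩ Set.Icc a c, hδ.restrict (le_refl a) hc.2, fun P Q hPf hQf => ?_⟩
  have hQ₂' : Q₂.IsFine δ := hQ₂.mono' (fun x => Set.inter_subset_left)
  have h1 := hcau (P.append Q₂) (Q.append Q₂)
    (TaggedPartition.append_isFine _ _ (hPf.mono' (fun x => Set.inter_subset_left)) hQ₂')
    (TaggedPartition.append_isFine _ _ (hQf.mono' (fun x => Set.inter_subset_left)) hQ₂')
  rwa [TaggedPartition.riemannSum_append, TaggedPartition.riemannSum_append,
    show riemannSum f G P + (riemannSum f G Q₂ - f c * G c)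
      - (riemannSum f G Q + (riemannSum f G Q₂ - f c * G c))
      = riemannSum f G P - riemannSum f G Q by ring] at h1

/-- Integrability passes to the right subinterval `[c,b]`. -/
theorem exists_hasIntegral_right (hex : ∃ A, HasIntegral f G a b A) (hc : c ∈ Set.Icc a b) :
    ∃ A₂, HasIntegral f G c b A₂ := by
  obtain ⟨A, hA⟩ := hex
  apply hasIntegral_of_cauchy hc.2
  intro ε hε
  obtain ⟨δ, hδ, hcau⟩ := hA.cauchy ε hε
  obtain ⟨Q₁, hQ₁⟩ := cousin hc.1 (hδ.restrict (le_refl a) hc.2)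
  refine ⟨fun x => δ x ∩ Set.Icc c b, hδ.restrict hc.1 (le_refl b), fun P Q hPf hQf => ?_⟩
  have hQ₁' : Q₁.IsFine δ := hQ₁.mono' (fun x => Set.inter_subset_left)
  have h1 := hcau (Q₁.append P) (Q₁.append Q)
    (TaggedPartition.append_isFine _ _ hQ₁' (hPf.mono' (fun x => Set.inter_subset_left)))
    (TaggedPartition.append_isFine _ _ hQ₁' (hQf.mono' (fun x => Set.inter_subset_left)))
  rwa [TaggedPartition.riemannSum_append, TaggedPartition.riemannSum_append,
    show riemannSum f G Q₁ + (riemannSum f G P - f c * G c)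
      - (riemannSum f G Q₁ + (riemannSum f G Q - f c * G c))
      = riemannSum f G P - riemannSum f G Q by ring] at h1

theorem exists_hasIntegral_sub (hex : ∃ A, HasIntegral f G a b A) {u v : K}
    (hu : a ≤ u) (huv : u ≤ v) (hv : v ≤ b) : ∃ A, HasIntegral f G u v A :=
  exists_hasIntegral_right (exists_hasIntegral_left hex ⟨le_trans hu huv, hv⟩)
    ⟨hu, huv⟩

/-- Additivity of the integral. -/
theorem hasIntegral_add {A A₁ A₂ : ℝ} (hc : c ∈ Set.Icc a b)
    (h : HasIntegral f G a b A) (h₁ : HasIntegral f G a c A₁) (h₂ : HasIntegral f G c b A₂) :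
    A = A₁ + A₂ - f c * G c := by
  by_contra hne
  set d := |A - (A₁ + A₂ - f c * G c)| with hd
  have hd0 : 0 < d := abs_pos.mpr (sub_ne_zero.mpr hne)
  obtain ⟨δ, hδ, hP⟩ := h (d/3) (by linarith)
  obtain ⟨δ₁, hδ₁, hP₁⟩ := h₁ (d/3) (by linarith)
  obtain ⟨δ₂, hδ₂, hP₂⟩ := h₂ (d/3) (by linarith)
  obtain ⟨P₁, hPf₁⟩ := cousin hc.1 (hδ₁.inter (hδ.restrict (le_refl a) hc.2))
  obtain ⟨P₂, hPf₂⟩ := cousin hc.2 (hδ₂.inter (hδ.restrict hc.1 (le_refl b)))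
  have e1 := hP₁ P₁ (hPf₁.mono' (fun x => Set.inter_subset_left))
  have e2 := hP₂ P₂ (hPf₂.mono' (fun x => Set.inter_subset_left))
  have e := hP (P₁.append P₂) (TaggedPartition.append_isFine _ _
    (hPf₁.mono' (fun x => Set.Subset.trans Set.inter_subset_right Set.inter_subset_left))
    (hPf₂.mono' (fun x => Set.Subset.trans Set.inter_subset_right Set.inter_subset_left)))
  rw [TaggedPartition.riemannSum_append] at e
  have : d < d := by
    calc d = |A - (A₁ + A₂ - f c * G c)| := hd
      _ ≤ |riemannSum f G P₁ + (riemannSum f G P₂ - f c * G c) - A|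
          + |riemannSum f G P₁ - A₁| + |riemannSum f G P₂ - A₂| := by
          rw [abs_sub_comm A]
          have := abs_add_le (riemannSum f G P₁ + (riemannSum f G P₂ - f c * G c) - A
            - (riemannSum f G P₁ - A₁)) (riemannSum f G P₁ - A₁)
          have h2 := abs_sub (riemannSum f G P₁ + (riemannSum f G P₂ - f c * G c) - A)
            (0 : ℝ)
          -- direct triangle estimate
          have key : riemannSum f G P₁ + (riemannSum f G P₂ - f c * G c) - A
              - (riemannSum f G P₁ - A₁) - (riemannSum f G P₂ - A₂)
              = (A₁ + A₂ - f c * G c) - A := by ring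
          calc |A₁ + A₂ - f c * G c - A|
              = |(riemannSum f G P₁ + (riemannSum f G P₂ - f c * G c) - A)
                - (riemannSum f G P₁ - A₁) - (riemannSum f G P₂ - A₂)| := by rw [key]
            _ ≤ |(riemannSum f G P₁ + (riemannSum f G P₂ - f c * G c) - A)
                - (riemannSum f G P₁ - A₁)| + |riemannSum f G P₂ - A₂| := abs_sub _ _
            _ ≤ |riemannSum f G P₁ + (riemannSum f G P₂ - f c * G c) - A|
                + |riemannSum f G P₁ - A₁| + |riemannSum f G P₂ - A₂| := by
                have := abs_sub (riemannSum f G P₁ + (riemannSum f G P₂ - f c * G c) - A)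
                  (riemannSum f G P₁ - A₁)
                linarith
      _ < d/3 + d/3 + d/3 := by
          apply add_lt_add (add_lt_add e e1) e2
      _ = d := by ring
  exact lt_irrefl _ this

open Classical in
/-- The value of the integral (or `0` if it does not exist). -/
noncomputable def intVal (f G : K → ℝ) (a b : K) : ℝ :=
  if h : ∃ A, HasIntegral f G a b A then h.choose else 0

theorem intVal_spec (h : ∃ A, HasIntegral f G a b A) : HasIntegral f G a b (intVal f G a b) := by
  classical
  rw [intVal, dif_pos h]
  exact h.choose_spec

theorem HasIntegral.intVal_eq {A : ℝ} (hab : a ≤ b) (h : HasIntegral f G a b A) :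
    intVal f G a b = A :=
  hasIntegral_unique hab (intVal_spec ⟨A, h⟩) h

theorem intVal_self (f G : K → ℝ) (a : K) : intVal f G a a = f a * G a :=
  (hasIntegral_degenerate f G a).intVal_eq (le_refl a)

/-- The interval function `ν(u,v) = ∫_{[u,v]} f dG - f(u) G(u)`. -/
noncomputable def nu (f G : K → ℝ) (u v : K) : ℝ := intVal f G u v - f u * G u

theorem nu_self (f G : K → ℝ) (u : K) : nu f G u u = 0 := by
  rw [nu, intVal_self]; ring

theorem nu_add (hex : ∃ A, HasIntegral f G a b A) {u v w : K}
    (hu : a ≤ u) (huv : u ≤ v) (hvw : v ≤ w) (hw : w ≤ b) :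
    nu f G u v + nu f G v w = nu f G u w := by
  have h1 := intVal_spec (exists_hasIntegral_sub hex hu huv (le_trans hvw hw))
  have h2 := intVal_spec (exists_hasIntegral_sub hex (le_trans hu huv) hvw hw)
  have h3 := intVal_spec (exists_hasIntegral_sub hex hu (le_trans huv hvw) hw)
  have := hasIntegral_add (c := v) ⟨huv, hvw⟩ h3 h1 h2
  rw [nu, nu, nu, this]
  ring

/-- Telescoping sum of `ν` along the division points of a chain. -/
theorem nu_telescope (hex : ∃ A, HasIntegral f G a b A) {n : ℕ} {x : ℕ → K}
    (hx0 : x 0 = a) (hxn : x n = b) (hm : ∀ i < n, x i ≤ x (i + 1)) :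
    ∑ i ∈ Finset.range n, nu f G (x i) (x (i + 1)) = nu f G a b := by
  have hxmono : ∀ i j, i ≤ j → j ≤ n → x i ≤ x j := by
    intro i j hij hj
    induction j with
    | zero => simp_all
    | succ j ih =>
      rcases Nat.eq_or_lt_of_le hij with rfl | h
      · exact le_refl _
      · exact le_trans (ih (Nat.lt_succ_iff.mp h) (le_trans (Nat.le_succ _) hj))
          (hm j (Nat.lt_of_succ_le hj))
  have key : ∀ k ≤ n, ∑ i ∈ Finset.range k, nu f G (x i) (x (i + 1)) = nu f G a (x k) := by
    intro k hk
    induction k with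
    | zero => rw [hx0]; simp [nu_self]
    | succ k ih =>
      rw [Finset.sum_range_succ, ih (le_trans (Nat.le_succ _) hk)]
      apply nu_add hex (le_refl a) _ (hm k (Nat.lt_of_succ_le hk))
        (hxn ▸ hxmono (k+1) n hk (le_refl n))
      rw [← hx0]
      exact hxmono 0 k (Nat.zero_le _) (by omega)
  rw [← hxn]
  exact key n (le_refl n)

theorem riemannSum_sub_head_le (hle : ∀ x, f x ≤ f' x) (hG : Monotone G)
    (P : TaggedPartition K a b) :
    riemannSum f G P - f a * G a ≤ riemannSum f' G P - f' a * G a := by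
  unfold riemannSum
  have : ∀ i ∈ Finset.range P.n,
      f (P.t (i+1)) * (G (P.x (i+1)) - G (P.x i)) ≤ f' (P.t (i+1)) * (G (P.x (i+1)) - G (P.x i)) := by
    intro i hi
    simp only [Finset.mem_range] at hi
    exact mul_le_mul_of_nonneg_right (hle _) (sub_nonneg.mpr (hG (P.mono i hi)))
  have h2 := Finset.sum_le_sum this
  linarith

/-- Monotonicity of `ν` in the integrand. -/
theorem nu_mono (hle : ∀ x, f x ≤ f' x) (hG : Monotone G)
    (hex : ∃ A, HasIntegral f G a b A) (hex' : ∃ A, HasIntegral f' G a b A) (hab : a ≤ b) :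
    nu f G a b ≤ nu f' G a b := by
  have h := intVal_spec hex
  have h' := intVal_spec hex'
  by_contra hlt
  push_neg at hlt
  have hd0 : 0 < (nu f G a b - nu f' G a b)/3 := by linarith
  obtain ⟨δ, hδ, hP⟩ := h _ hd0
  obtain ⟨δ', hδ', hP'⟩ := h' _ hd0
  obtain ⟨P, hPf⟩ := cousin hab (hδ.inter hδ')
  have e1 := hP P (hPf.mono' (fun x => Set.inter_subset_left))
  have e2 := hP' P (hPf.mono' (fun x => Set.inter_subset_right))
  have e3 := riemannSum_sub_head_le hle hG P
  rw [abs_lt] at e1 e2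
  simp only [nu] at e1 e2 hlt
  linarith [e1.1, e1.2, e2.1, e2.2]

end SubIntervals
section Combine

variable {K : Type*} [LinearOrder K] [TopologicalSpace K] [OrderTopology K] [CompactSpace K]
variable {f G : K → ℝ} {a b : K} {δ : K → Set K}

theorem TaggedPartition.single_isFine {t : K} (hab : a ≤ b) (ht : t ∈ Set.Icc a b)
    (h : Set.Ioc a b ⊆ δ t) : (TaggedPartition.single a b t hab ht).IsFine δ := by
  intro j hj
  replace hj : j < 1 := hj
  interval_cases j
  intro z hz
  replace hz : z ∈ Set.Ioc a b := by
    simpa [TaggedPartition.single] using hz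
  exact h hz

theorem exists_combine (f G : K → ℝ) (k : ℕ) (x : ℕ → K)
    (Q : ∀ i, i < k → TaggedPartition K (x i) (x (i+1)))
    (hQf : ∀ i (h : i < k), (Q i h).IsFine δ)
    (SQ : ℕ → ℝ) (hSQ : ∀ i (h : i < k), SQ i = riemannSum f G (Q i h)) :
    ∃ R : TaggedPartition K (x 0) (x k), R.IsFine δ ∧
      riemannSum f G R = f (x 0) * G (x 0)
        + ∑ i ∈ Finset.range k, (SQ i - f (x i) * G (x i)) := by
  induction k with
  | zero =>
    exact ⟨TaggedPartition.refl (x 0), TaggedPartition.refl_isFine δ, by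
      simp [riemannSum_refl]⟩
  | succ k ih =>
    obtain ⟨R, hRf, hRS⟩ := ih (fun i h => Q i (by omega)) (fun i h => hQf i (by omega))
      (fun i h => hSQ i (by omega))
    refine ⟨R.append (Q k (by omega)), TaggedPartition.append_isFine _ _ hRf (hQf k (by omega)), ?_⟩
    rw [TaggedPartition.riemannSum_append, hRS, Finset.sum_range_succ, hSQ k (by omega)]
    ring

theorem exists_combine' (f G : K → ℝ) (k : ℕ) (x : ℕ → K)
    (ha : x 0 = a) (hb : x k = b)
    (Q : ∀ i, i < k → TaggedPartition K (x i) (x (i+1)))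
    (hQf : ∀ i (h : i < k), (Q i h).IsFine δ)
    (SQ : ℕ → ℝ) (hSQ : ∀ i (h : i < k), SQ i = riemannSum f G (Q i h)) :
    ∃ R : TaggedPartition K a b, R.IsFine δ ∧
      riemannSum f G R = f a * G a
        + ∑ i ∈ Finset.range k, (SQ i - f (x i) * G (x i)) := by
  subst ha hb
  exact exists_combine f G k x Q hQf SQ hSQ

/-- Saks–Henstock lemma: partial sums of a fine partition are controlled. -/
theorem henstock {A ε : ℝ} (hab : a ≤ b) (hA : HasIntegral f G a b A)
    (hδ : IsGauge K a b δ)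
    (hacc : ∀ P : TaggedPartition K a b, P.IsFine δ → |riemannSum f G P - A| < ε)
    (P : TaggedPartition K a b) (S : Finset ℕ) (hS : S ⊆ Finset.range P.n)
    (hfine : ∀ i ∈ S, Set.Ioc (P.x i) (P.x (i+1)) ⊆ δ (P.t (i+1))) :
    |∑ i ∈ S, (f (P.t (i+1)) * (G (P.x (i+1)) - G (P.x i))
      - nu f G (P.x i) (P.x (i+1)))| ≤ ε := by
  classical
  have hex : ∃ A, HasIntegral f G a b A := ⟨A, hA⟩
  by_contra hcon
  push_neg at hcon
  set T := ∑ i ∈ S, (f (P.t (i+1)) * (G (P.x (i+1)) - G (P.x i))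
    - nu f G (P.x i) (P.x (i+1))) with hT
  have hη : 0 < (|T| - ε) / (P.n + 1) := by
    have : (0:ℝ) < |T| - ε := by linarith
    positivity
  set η' := (|T| - ε) / (P.n + 1) with hη'
  -- choose partitions on each subinterval
  have hQ : ∀ i, ∀ h : i < P.n, ∃ R : TaggedPartition K (P.x i) (P.x (i+1)), R.IsFine δ ∧
      ((i ∈ S ∧ riemannSum f G R
          = f (P.x i) * G (P.x i) + f (P.t (i+1)) * (G (P.x (i+1)) - G (P.x i)))
        ∨ (i ∉ S ∧ |riemannSum f G R - intVal f G (P.x i) (P.x (i+1))| ≤ η')) := by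
    intro i h
    by_cases hiS : i ∈ S
    · refine ⟨TaggedPartition.single _ _ _ (P.mono i h) (P.tag_mem i h),
        TaggedPartition.single_isFine _ _ (hfine i hiS), Or.inl ⟨hiS, ?_⟩⟩
      rw [riemannSum_single]
    · have hxi : P.x i ∈ Set.Icc a b := P.x_mem h.le
      have hxi1 : P.x (i+1) ∈ Set.Icc a b := P.x_mem h
      have hsub : ∃ B, HasIntegral f G (P.x i) (P.x (i+1)) B :=
        exists_hasIntegral_sub hex hxi.1 (P.mono i h) hxi1.2
      obtain ⟨δᵢ, hδᵢ, haccᵢ⟩ := intVal_spec hsub η' hη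
      obtain ⟨R, hRf⟩ := cousin (P.mono i h)
        ((hδᵢ.inter (hδ.restrict hxi.1 hxi1.2)))
      refine ⟨R, ?_, Or.inr ⟨hiS, (haccᵢ R (hRf.mono' (fun x => Set.inter_subset_left))).le⟩⟩
      exact (hRf.mono' (fun x => Set.inter_subset_right)).mono'
        (fun x => Set.inter_subset_left)
  choose Q hQf hQp using hQ
  set SQ : ℕ → ℝ := fun i => if h : i < P.n then riemannSum f G (Q i h) else 0 with hSQdef
  obtain ⟨R, hRf, hRS⟩ := exists_combine' f G P.n P.x P.x_zero P.x_last Q hQf SQ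
    (fun i h => by rw [hSQdef]; simp [h])
  have hRA := hacc R hRf
  set E := ∑ i ∈ Finset.range P.n \ S,
    (SQ i - f (P.x i) * G (P.x i) - nu f G (P.x i) (P.x (i+1))) with hE
  -- A = f a G a + ∑ ν
  have hA' : A = f a * G a + ∑ i ∈ Finset.range P.n, nu f G (P.x i) (P.x (i+1)) := by
    have h1 := nu_telescope hex P.x_zero P.x_last P.mono
    have h2 : nu f G a b = A - f a * G a := by
      rw [nu, hA.intVal_eq hab]
    rw [h1, h2]; ring
  have hdiff : riemannSum f G R - A
      = ∑ i ∈ Finset.range P.n, (SQ i - f (P.x i) * G (P.x i) - nu f G (P.x i) (P.x (i+1))) := by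
    rw [hRS, hA']
    simp only [Finset.sum_sub_distrib]
    ring
  have hsq : ∑ i ∈ S, (SQ i - f (P.x i) * G (P.x i) - nu f G (P.x i) (P.x (i+1))) = T := by
    rw [hT]
    apply Finset.sum_congr rfl
    intro i hiS
    have h : i < P.n := Finset.mem_range.mp (hS hiS)
    rcases hQp i h with ⟨_, he⟩ | ⟨hnot, _⟩
    · rw [hSQdef]; simp only [dif_pos h]; rw [he]; ring
    · exact absurd hiS hnot
  have hTE : riemannSum f G R - A = T + E := by
    rw [hdiff, ← Finset.sum_sdiff hS, hsq, hE]
    ring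
  have hbound : |E| ≤ P.n * η' := by
    rw [hE]
    calc |∑ i ∈ Finset.range P.n \ S,
        (SQ i - f (P.x i) * G (P.x i) - nu f G (P.x i) (P.x (i+1)))|
        ≤ ∑ i ∈ Finset.range P.n \ S,
          |SQ i - f (P.x i) * G (P.x i) - nu f G (P.x i) (P.x (i+1))| :=
            Finset.abs_sum_le_sum_abs _ _
      _ ≤ ∑ _i ∈ Finset.range P.n \ S, η' := by
          apply Finset.sum_le_sum
          intro i hi
          have h : i < P.n := Finset.mem_range.mp (Finset.mem_sdiff.mp hi).1
          have hns : i ∉ S := (Finset.mem_sdiff.mp hi).2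
          rcases hQp i h with ⟨hiS, _⟩ | ⟨_, he⟩
          · exact absurd hiS hns
          · rw [hSQdef]
            simp only [dif_pos h]
            rw [nu]
            have heq2 : riemannSum f G (Q i h) - f (P.x i) * G (P.x i)
                - (intVal f G (P.x i) (P.x (i+1)) - f (P.x i) * G (P.x i))
                = riemannSum f G (Q i h) - intVal f G (P.x i) (P.x (i+1)) := by ring
            rw [heq2]
            exact he
      _ ≤ P.n * η' := by
          rw [Finset.sum_const, nsmul_eq_mul]
          have hcard : ((Finset.range P.n \ S).card : ℝ) ≤ P.n := by
            have := Finset.card_le_card (Finset.sdiff_subset (s := Finset.range P.n) (t := S))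
            rw [Finset.card_range] at this
            exact_mod_cast this
          exact mul_le_mul_of_nonneg_right hcard hη.le
  -- final contradiction
  have habs : |T| ≤ |riemannSum f G R - A| + |E| := by
    have h3 : T = (riemannSum f G R - A) - E := by rw [hTE]; ring
    rw [h3]
    exact abs_sub _ _
  have hfin : |T| < |T| := by
    have h4 : (P.n : ℝ) * η' < (P.n + 1) * η' := by nlinarith [hη]
    have h5 : ((P.n : ℝ) + 1) * η' = |T| - ε := by
      rw [hη']
      field_simp
    linarith
  exact lt_irrefl _ hfin

end Combine
section MeasureLemmas

variable {K : Type*} [LinearOrder K] [TopologicalSpace K] [OrderTopology K] [CompactSpace K]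
  [BoundedOrder K] [MeasurableSpace K] [BorelSpace K]
variable {G : K → ℝ} {μ : MeasureTheory.Measure K}

theorem measure_Ioc_eq (hGmono : Monotone G) (hGpos : ∀ x : K, 0 ≤ G x)
    (hμ : ∀ x : K, μ (Set.Icc ⊥ x) = ENNReal.ofReal (G x)) {u v : K} (huv : u ≤ v) :
    μ (Set.Ioc u v) = ENNReal.ofReal (G v - G u) := by
  have hsplit : Set.Icc (⊥:K) u ∪ Set.Ioc u v = Set.Icc ⊥ v :=
    Set.Icc_union_Ioc_eq_Icc bot_le huv
  have hdisj : Disjoint (Set.Icc (⊥:K) u) (Set.Ioc u v) := by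
    apply Set.disjoint_left.mpr
    intro z hz hz'
    exact absurd hz.2 (not_le.mpr hz'.1)
  have hm := measure_union (μ := μ) hdisj measurableSet_Ioc
  rw [hsplit, hμ, hμ] at hm
  have hfin : ENNReal.ofReal (G u) ≠ ⊤ := ENNReal.ofReal_ne_top
  have : μ (Set.Ioc u v) = ENNReal.ofReal (G v) - ENNReal.ofReal (G u) := by
    rw [hm]
    rw [ENNReal.add_sub_cancel_left hfin]
  rw [this, ← ENNReal.ofReal_sub _ (hGpos u)]

theorem toReal_measure_Ioc (hGmono : Monotone G) (hGpos : ∀ x : K, 0 ≤ G x)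
    (hμ : ∀ x : K, μ (Set.Icc ⊥ x) = ENNReal.ofReal (G x)) {u v : K} (huv : u ≤ v) :
    G v - G u = (μ (Set.Ioc u v)).toReal := by
  rw [measure_Ioc_eq hGmono hGpos hμ huv, ENNReal.toReal_ofReal (by linarith [hGmono huv])]

/-- Sum of measures of disjoint subsets of `W` is at most the measure of `W`. -/
theorem sum_toReal_measure_le {s : Finset ℕ} {V : ℕ → Set K} {W : Set K}
    (hmeas : ∀ i ∈ s, MeasurableSet (V i))
    (hdisj : ∀ i ∈ s, ∀ j ∈ s, i ≠ j → Disjoint (V i) (V j))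
    (hsub : ∀ i ∈ s, V i ⊆ W) (hW : μ W ≠ ⊤) :
    ∑ i ∈ s, (μ (V i)).toReal ≤ (μ W).toReal := by
  classical
  have hUnion : μ (⋃ i ∈ s, V i) = ∑ i ∈ s, μ (V i) := by
    apply measure_biUnion_finset _ hmeas
    intro i hi j hj hij
    exact hdisj i hi j hj hij
  have hle : ∑ i ∈ s, μ (V i) ≤ μ W := by
    rw [← hUnion]
    exact measure_mono (Set.iUnion₂_subset hsub)
  have hfin : ∀ i ∈ s, μ (V i) ≠ ⊤ := by
    intro i hi
    exact ne_top_of_le_ne_top hW (measure_mono (hsub i hi))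
  rw [← ENNReal.toReal_sum hfin]
  exact ENNReal.toReal_mono hW hle

end MeasureLemmas
section Helpers

theorem geom_sum_le_of_nonneg {c : ℝ} (hc : 0 ≤ c) (s : Finset ℕ) :
    ∑ m ∈ s, c / 2 ^ (m + 1) ≤ c := by
  have hform : ∀ m : ℕ, c / 2 ^ (m + 1) = c / 2 / 2 ^ m := by
    intro m; rw [pow_succ]; ring
  calc ∑ m ∈ s, c / 2 ^ (m + 1) = ∑ m ∈ s, c / 2 / 2 ^ m := by
        exact Finset.sum_congr rfl (fun m _ => hform m)
    _ ≤ ∑' m : ℕ, c / 2 / 2 ^ m := by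
        apply Summable.sum_le_tsum s (fun m _ => by positivity) (summable_geometric_two' c)
    _ = c := tsum_geometric_two' c

end Helpers
section Main

open MeasureTheory

theorem mct_of_monotone {K : Type*} [LinearOrder K] [TopologicalSpace K]
    [OrderTopology K] [CompactSpace K] [BoundedOrder K] [MeasurableSpace K] [BorelSpace K]
    (G : K → ℝ) (hGmono : Monotone G) (hGpos : ∀ x : K, 0 ≤ G x)
    (μ : MeasureTheory.Measure K)
    (hμ : ∀ x : K, μ (Set.Icc ⊥ x) = ENNReal.ofReal (G x))
    (f : ℕ → K → ℝ) (A : ℕ → ℝ) (hint : ∀ m, HasIntegral (f m) G (⊥ : K) ⊤ (A m))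
    (hfmono : Monotone f) (g : K → ℝ)
    (hconv : GNull μ {x : K | ¬ Filter.Tendsto (fun m => f m x) Filter.atTop (nhds (g x))})
    (L : ℝ) (hA : Filter.Tendsto A Filter.atTop (nhds L)) :
    HasIntegral g G (⊥ : K) ⊤ L := by
  classical
  intro ε hε
  set N := {x : K | ¬ Filter.Tendsto (fun m => f m x) Filter.atTop (nhds (g x))} with hNdef
  have hGT : (0:ℝ) ≤ G ⊤ := hGpos ⊤
  set ε' := ε / (2 * G ⊤ + 5) with hε'def
  have hε' : 0 < ε' := by
    rw [hε'def]; positivity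
  -- m₀ such that A is close to L
  obtain ⟨m₀, hm₀⟩ := Metric.tendsto_atTop.mp hA ε' hε'
  -- gauges for each f m
  have hδm : ∀ m : ℕ, ∃ δ, IsGauge K ⊥ ⊤ δ ∧
      ∀ P : TaggedPartition K ⊥ ⊤, P.IsFine δ →
        |riemannSum (f m) G P - A m| < ε' / 2 ^ (m + 1) := by
    intro m
    exact hint m _ (by positivity)
  choose δI hδI haccI using hδm
  -- index of convergence
  have hm₁ex : ∀ x : K, ∃ m, x ∉ N → ∀ j ≥ m, |f j x - g x| ≤ ε' := by
    intro x
    by_cases hx : x ∈ N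
    · exact ⟨0, fun h => absurd hx h⟩
    · have hx' : Filter.Tendsto (fun m => f m x) Filter.atTop (nhds (g x)) := by
        have := hx
        rw [hNdef] at this
        simpa using this
      obtain ⟨M, hM⟩ := Metric.tendsto_atTop.mp hx' ε' hε'
      refine ⟨M, fun _ j hj => ?_⟩
      have := hM j hj
      rw [Real.dist_eq] at this
      exact this.le
  choose m₁ hm₁ using hm₁ex
  set m' : K → ℕ := fun x => if x ∈ N then m₀ else max m₀ (m₁ x) with hm'def
  have hm'ge : ∀ x, m₀ ≤ m' x := by
    intro x
    rw [hm'def]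
    dsimp only
    split
    · exact le_refl _
    · exact le_max_left _ _
  have hm'good : ∀ x, x ∉ N → |f (m' x) x - g x| ≤ ε' := by
    intro x hx
    have h1 : m' x = max m₀ (m₁ x) := by rw [hm'def]; dsimp only; rw [if_neg hx]
    exact h1 ▸ hm₁ x hx _ (le_max_right _ _)
  have hm'bad : ∀ x, x ∈ N → m' x = m₀ := by
    intro x hx
    rw [hm'def]; dsimp only; rw [if_pos hx]
  -- covers of the null set
  have hcovex : ∀ k : ℕ, ∃ I : ℕ → Set K, (∀ n, IsOpen (I n) ∧ (I n).OrdConnected) ∧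
      N ⊆ ⋃ n, I n ∧ ∑' n, μ (I n) < ENNReal.ofReal (ε' / ((k + 1) * 2 ^ (k + 1))) := by
    intro k
    exact hconv _ (by positivity)
  choose I hIprop hIcov hIsum using hcovex
  set k' : K → ℕ := fun x => ⌈|g x - f m₀ x|⌉₊ with hk'def
  have hn'ex : ∀ x : K, ∃ n, x ∈ N → x ∈ I (k' x) n := by
    intro x
    by_cases hx : x ∈ N
    · obtain ⟨s, hs⟩ := Set.mem_iUnion.mp (hIcov (k' x) hx)
      exact ⟨s, fun _ => hs⟩
    · exact ⟨0, fun h => absurd h hx⟩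
  choose n' hn' using hn'ex
  -- the gauge
  set δ : K → Set K := fun x =>
    if x ∈ N then δI m₀ x ∩ (I (k' x) (n' x) ∩ Set.Icc ⊥ ⊤) else δI (m' x) x with hδdef
  have hδgauge : IsGauge K ⊥ ⊤ δ := by
    intro x hx
    rw [hδdef]
    dsimp only
    by_cases hxN : x ∈ N
    · rw [if_pos hxN]
      obtain ⟨hmem, hoc, U, hU, hform⟩ := hδI m₀ x hx
      refine ⟨⟨hmem, hn' x hxN, hx⟩,
        hoc.inter (((hIprop (k' x) (n' x)).2).inter Set.ordConnected_Icc),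
        U ∩ I (k' x) (n' x), hU.inter (hIprop (k' x) (n' x)).1, ?_⟩
      rw [hform]
      ext y
      simp only [Set.mem_inter_iff]
      tauto
    · rw [if_neg hxN]
      exact hδI (m' x) x hx
  have hδsub : ∀ x, δ x ⊆ δI (m' x) x := by
    intro x
    rw [hδdef]
    dsimp only
    by_cases hxN : x ∈ N
    · rw [if_pos hxN, hm'bad x hxN]
      exact Set.inter_subset_left
    · rw [if_neg hxN]
  have hδsubI : ∀ x, x ∈ N → δ x ⊆ I (k' x) (n' x) := by
    intro x hx
    rw [hδdef]
    dsimp only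
    rw [if_pos hx]
    exact Set.Subset.trans Set.inter_subset_right Set.inter_subset_left
  -- measures of cover sets are small
  have hμI : ∀ k n, (μ (I k n)).toReal ≤ ε' / ((k + 1) * 2 ^ (k + 1)) := by
    intro k n
    have h1 : μ (I k n) ≤ ENNReal.ofReal (ε' / ((k + 1) * 2 ^ (k + 1))) :=
      le_trans (ENNReal.le_tsum n) (hIsum k).le
    exact ENNReal.toReal_le_of_le_ofReal (by positivity) h1
  have hμIfin : ∀ k n, μ (I k n) ≠ ⊤ := by
    intro k n
    exact ne_top_of_le_ne_top ENNReal.ofReal_ne_top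
      (le_trans (ENNReal.le_tsum n) (hIsum k).le)
  refine ⟨δ, hδgauge, ?_⟩
  intro P hPf
  set τ : ℕ → K := fun i => P.t (i + 1) with hτdef
  set Δ : ℕ → ℝ := fun i => G (P.x (i + 1)) - G (P.x i) with hΔdef
  have hΔpos : ∀ i < P.n, 0 ≤ Δ i := by
    intro i hi
    rw [hΔdef]
    exact sub_nonneg.mpr (hGmono (P.mono i hi))
  set M := ((Finset.range P.n).sup fun i => m' (τ i)) ⊔ m' ⊥ with hMdef
  have hMi : ∀ i ∈ Finset.range P.n, m' (τ i) ≤ M := by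
    intro i hi
    rw [hMdef]
    exact le_trans (Finset.le_sup (f := fun i => m' (τ i)) hi) le_sup_left
  have hMbot : m' ⊥ ≤ M := by
    rw [hMdef]; exact le_sup_right
  have hMm₀ : m₀ ≤ M := le_trans (hm'ge ⊥) hMbot
  -- decomposition
  set T0 := (g ⊥ - f (m' ⊥) ⊥) * G ⊥ with hT0def
  set T1 := ∑ i ∈ Finset.range P.n, (g (τ i) - f (m' (τ i)) (τ i)) * Δ i with hT1def
  set T2 := f (m' ⊥) ⊥ * G ⊥ + ∑ i ∈ Finset.range P.n, f (m' (τ i)) (τ i) * Δ i - L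
    with hT2def
  have hdecomp : riemannSum g G P - L = T0 + T1 + T2 := by
    rw [hT0def, hT1def, hT2def]
    unfold riemannSum
    simp only [sub_mul, Finset.sum_sub_distrib]
    ring
  -- Estimate of T0
  have hT0 : |T0| ≤ ε' * G ⊤ + ε' := by
    by_cases hbot : (⊥ : K) ∈ N
    · have hm'b : m' ⊥ = m₀ := hm'bad ⊥ hbot
      have habs : |g ⊥ - f (m' ⊥) ⊥| ≤ (k' ⊥ : ℝ) + 1 := by
        rw [hm'b, hk'def]
        dsimp only
        have := Nat.le_ceil |g ⊥ - f m₀ ⊥|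
        push_cast
        linarith
      have h1 : μ {(⊥:K)} = ENNReal.ofReal (G ⊥) := by rw [← Set.Icc_self]; exact hμ ⊥
      have h2 : μ {(⊥:K)} ≤ μ (I (k' ⊥) (n' ⊥)) :=
        measure_mono (Set.singleton_subset_iff.mpr (hn' ⊥ hbot))
      have h3 : G ⊥ ≤ (μ (I (k' ⊥) (n' ⊥))).toReal := by
        have := ENNReal.toReal_mono (hμIfin _ _) h2
        rwa [h1, ENNReal.toReal_ofReal (hGpos ⊥)] at this
      have hk1 : (0:ℝ) < (k' ⊥ : ℝ) + 1 := by positivity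
      rw [hT0def, abs_mul, abs_of_nonneg (hGpos ⊥)]
      have step1 : |g ⊥ - f (m' ⊥) ⊥| * G ⊥
          ≤ ((k' ⊥ : ℝ) + 1) * (μ (I (k' ⊥) (n' ⊥))).toReal :=
        mul_le_mul habs h3 (hGpos ⊥) hk1.le
      have step2 : ((k' ⊥ : ℝ) + 1) * (μ (I (k' ⊥) (n' ⊥))).toReal
          ≤ ((k' ⊥ : ℝ) + 1) * (ε' / (((k' ⊥ : ℝ) + 1) * 2 ^ (k' ⊥ + 1))) := by
        apply mul_le_mul_of_nonneg_left _ hk1.le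
        have := hμI (k' ⊥) (n' ⊥)
        push_cast at this ⊢
        exact this
      have step3 : ((k' ⊥ : ℝ) + 1) * (ε' / (((k' ⊥ : ℝ) + 1) * 2 ^ (k' ⊥ + 1)))
          = ε' / 2 ^ (k' ⊥ + 1) := by
        field_simp
      have step4 : ε' / 2 ^ (k' ⊥ + 1) ≤ ε' := by
        apply div_le_self hε'.le
        exact one_le_pow₀ (by norm_num : (1:ℝ) ≤ 2)
      have := mul_nonneg hε'.le hGT
      linarith
    · rw [hT0def, abs_mul, abs_of_nonneg (hGpos ⊥)]
      have h1 : |g ⊥ - f (m' ⊥) ⊥| ≤ ε' := by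
        rw [abs_sub_comm]; exact hm'good ⊥ hbot
      have h2 : G ⊥ ≤ G ⊤ := hGmono le_top
      nlinarith [hGpos ⊥, hε'.le, abs_nonneg (g ⊥ - f (m' ⊥) ⊥)]
  -- Estimate of T1
  have hdisjIoc : ∀ i < P.n, ∀ j < P.n, i ≠ j →
      Disjoint (Set.Ioc (P.x i) (P.x (i+1))) (Set.Ioc (P.x j) (P.x (j+1))) := by
    have key : ∀ i j, i < j → j < P.n →
        Disjoint (Set.Ioc (P.x i) (P.x (i+1))) (Set.Ioc (P.x j) (P.x (j+1))) := by
      intro i j hij hj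
      apply Set.disjoint_left.mpr
      intro z hz1 hz2
      have h1 : P.x (i+1) ≤ P.x j := P.x_mono hij hj.le
      exact absurd (le_trans hz1.2 h1) (not_le.mpr hz2.1)
    intro i hi j hj hij
    rcases lt_or_gt_of_ne hij with h | h
    · exact key i j h hj
    · exact (key j i h hi).symm
  have hT1 : |T1| ≤ ε' * G ⊤ + ε' := by
    have hsplit := Finset.sum_filter_add_sum_filter_not (Finset.range P.n)
      (fun i => τ i ∈ N) (fun i => (g (τ i) - f (m' (τ i)) (τ i)) * Δ i)
    set B := (Finset.range P.n).filter (fun i => τ i ∈ N) with hBdef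
    set Bc := (Finset.range P.n).filter (fun i => ¬ τ i ∈ N) with hBcdef
    -- good part
    have hgood : |∑ i ∈ Bc, (g (τ i) - f (m' (τ i)) (τ i)) * Δ i| ≤ ε' * G ⊤ := by
      have h1 : ∀ i ∈ Bc, |(g (τ i) - f (m' (τ i)) (τ i)) * Δ i| ≤ ε' * Δ i := by
        intro i hi
        obtain ⟨hir, hiN⟩ := Finset.mem_filter.mp hi
        have hilt := Finset.mem_range.mp hir
        rw [abs_mul, abs_of_nonneg (hΔpos i hilt)]
        apply mul_le_mul_of_nonneg_right _ (hΔpos i hilt)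
        rw [abs_sub_comm]
        exact hm'good (τ i) hiN
      have htel : ∑ i ∈ Finset.range P.n, Δ i = G ⊤ - G ⊥ := by
        have := Finset.sum_range_sub (fun i => G (P.x i)) P.n
        rw [hΔdef]
        simp only at this ⊢
        rw [this, P.x_last, P.x_zero]
      calc |∑ i ∈ Bc, (g (τ i) - f (m' (τ i)) (τ i)) * Δ i|
          ≤ ∑ i ∈ Bc, |(g (τ i) - f (m' (τ i)) (τ i)) * Δ i| := Finset.abs_sum_le_sum_abs _ _
        _ ≤ ∑ i ∈ Bc, ε' * Δ i := Finset.sum_le_sum h1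
        _ ≤ ∑ i ∈ Finset.range P.n, ε' * Δ i := by
            apply Finset.sum_le_sum_of_subset_of_nonneg (Finset.filter_subset _ _)
            intro i hir _
            exact mul_nonneg hε'.le (hΔpos i (Finset.mem_range.mp hir))
        _ = ε' * (G ⊤ - G ⊥) := by rw [← Finset.mul_sum, htel]
        _ ≤ ε' * G ⊤ := by nlinarith [hGpos ⊥, hε'.le]
    -- bad part
    have hbad : |∑ i ∈ B, (g (τ i) - f (m' (τ i)) (τ i)) * Δ i| ≤ ε' := by
      have hptw : ∀ i ∈ B, |(g (τ i) - f (m' (τ i)) (τ i)) * Δ i|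
          ≤ ((k' (τ i) : ℝ) + 1) * Δ i := by
        intro i hi
        obtain ⟨hir, hiN⟩ := Finset.mem_filter.mp hi
        have hilt := Finset.mem_range.mp hir
        rw [abs_mul, abs_of_nonneg (hΔpos i hilt)]
        apply mul_le_mul_of_nonneg_right _ (hΔpos i hilt)
        rw [hm'bad _ hiN, hk'def]
        dsimp only
        have := Nat.le_ceil |g (τ i) - f m₀ (τ i)|
        linarith
      set pf : ℕ → ℕ × ℕ := fun i => (k' (τ i), n' (τ i)) with hpfdef
      have h2 : ∑ i ∈ B, ((k' (τ i) : ℝ) + 1) * Δ i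
          = ∑ p ∈ B.image pf, ∑ i ∈ B.filter (fun i => pf i = p),
              ((k' (τ i) : ℝ) + 1) * Δ i :=
        (Finset.sum_fiberwise_of_maps_to (fun i hi => Finset.mem_image_of_mem pf hi) _).symm
      have h3 : ∀ p ∈ B.image pf, ∑ i ∈ B.filter (fun i => pf i = p),
          ((k' (τ i) : ℝ) + 1) * Δ i ≤ ((p.1 : ℝ) + 1) * (μ (I p.1 p.2)).toReal := by
        intro p hp
        have hterm : ∀ i ∈ B.filter (fun i => pf i = p), ((k' (τ i) : ℝ) + 1) * Δ i
            = ((p.1 : ℝ) + 1) * (μ (Set.Ioc (P.x i) (P.x (i+1)))).toReal := by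
          intro i hi
          obtain ⟨hiB, hpe⟩ := Finset.mem_filter.mp hi
          obtain ⟨hir, hiN⟩ := Finset.mem_filter.mp hiB
          have hilt := Finset.mem_range.mp hir
          have hk : k' (τ i) = p.1 := congrArg Prod.fst hpe
          have hΔeq : Δ i = (μ (Set.Ioc (P.x i) (P.x (i+1)))).toReal := by
            rw [hΔdef]
            exact toReal_measure_Ioc hGmono hGpos hμ (P.mono i hilt)
          rw [hΔeq, hk]
        rw [Finset.sum_congr rfl hterm, ← Finset.mul_sum]
        apply mul_le_mul_of_nonneg_left _ (by positivity)
        apply sum_toReal_measure_le (μ := μ)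
        · exact fun i _ => measurableSet_Ioc
        · intro i hi j hj hij
          obtain ⟨hiB, _⟩ := Finset.mem_filter.mp hi
          obtain ⟨hjB, _⟩ := Finset.mem_filter.mp hj
          exact hdisjIoc i (Finset.mem_range.mp (Finset.mem_filter.mp hiB).1)
            j (Finset.mem_range.mp (Finset.mem_filter.mp hjB).1) hij
        · intro i hi
          obtain ⟨hiB, hpe⟩ := Finset.mem_filter.mp hi
          obtain ⟨hir, hiN⟩ := Finset.mem_filter.mp hiB
          have hilt := Finset.mem_range.mp hir
          have hk : k' (τ i) = p.1 := congrArg Prod.fst hpe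
          have hn : n' (τ i) = p.2 := congrArg Prod.snd hpe
          calc Set.Ioc (P.x i) (P.x (i+1)) ⊆ δ (τ i) := hPf i hilt
            _ ⊆ I (k' (τ i)) (n' (τ i)) := hδsubI (τ i) hiN
            _ = I p.1 p.2 := by rw [hk, hn]
        · exact hμIfin p.1 p.2
      have h6 : ∀ k : ℕ, ∀ Ns : Finset ℕ,
          ∑ nn ∈ Ns, ((k:ℝ) + 1) * (μ (I k nn)).toReal ≤ ε' / 2 ^ (k + 1) := by
        intro k Ns
        rw [← Finset.mul_sum]
        have hsum : ∑ nn ∈ Ns, (μ (I k nn)).toReal ≤ ε' / (((k:ℝ) + 1) * 2 ^ (k + 1)) := by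
          have hfin : ∀ nn ∈ Ns, μ (I k nn) ≠ ⊤ := fun nn _ => hμIfin k nn
          rw [← ENNReal.toReal_sum hfin]
          refine le_trans (ENNReal.toReal_mono ENNReal.ofReal_ne_top
            (le_trans (ENNReal.sum_le_tsum Ns) (hIsum k).le)) ?_
          rw [ENNReal.toReal_ofReal (by positivity)]
        calc ((k:ℝ) + 1) * ∑ nn ∈ Ns, (μ (I k nn)).toReal
            ≤ ((k:ℝ) + 1) * (ε' / (((k:ℝ) + 1) * 2 ^ (k + 1))) :=
              mul_le_mul_of_nonneg_left hsum (by positivity)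
          _ = ε' / 2 ^ (k + 1) := by field_simp
      set Ks := (B.image pf).image Prod.fst with hKs
      set Ns := (B.image pf).image Prod.snd with hNs
      have h4 : ∑ p ∈ B.image pf, ((p.1:ℝ) + 1) * (μ (I p.1 p.2)).toReal
          ≤ ∑ p ∈ Ks ×ˢ Ns, ((p.1:ℝ) + 1) * (μ (I p.1 p.2)).toReal := by
        apply Finset.sum_le_sum_of_subset_of_nonneg
        · intro p hp
          exact Finset.mem_product.mpr
            ⟨Finset.mem_image_of_mem Prod.fst hp, Finset.mem_image_of_mem Prod.snd hp⟩
        · intro p _ _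
          positivity
      have h5 : ∑ p ∈ Ks ×ˢ Ns, ((p.1:ℝ) + 1) * (μ (I p.1 p.2)).toReal
          = ∑ k ∈ Ks, ∑ nn ∈ Ns, ((k:ℝ) + 1) * (μ (I k nn)).toReal :=
        Finset.sum_product Ks Ns (fun p => ((p.1:ℝ) + 1) * (μ (I p.1 p.2)).toReal)
      calc |∑ i ∈ B, (g (τ i) - f (m' (τ i)) (τ i)) * Δ i|
          ≤ ∑ i ∈ B, |(g (τ i) - f (m' (τ i)) (τ i)) * Δ i| := Finset.abs_sum_le_sum_abs _ _
        _ ≤ ∑ i ∈ B, ((k' (τ i) : ℝ) + 1) * Δ i := Finset.sum_le_sum hptw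
        _ = ∑ p ∈ B.image pf, ∑ i ∈ B.filter (fun i => pf i = p),
              ((k' (τ i) : ℝ) + 1) * Δ i := h2
        _ ≤ ∑ p ∈ B.image pf, ((p.1:ℝ) + 1) * (μ (I p.1 p.2)).toReal :=
            Finset.sum_le_sum h3
        _ ≤ ∑ p ∈ Ks ×ˢ Ns, ((p.1:ℝ) + 1) * (μ (I p.1 p.2)).toReal := h4
        _ = ∑ k ∈ Ks, ∑ nn ∈ Ns, ((k:ℝ) + 1) * (μ (I k nn)).toReal := h5
        _ ≤ ∑ k ∈ Ks, ε' / 2 ^ (k + 1) := Finset.sum_le_sum (fun k _ => h6 k Ns)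
        _ ≤ ε' := geom_sum_le_of_nonneg hε'.le Ks
    rw [hT1def, ← hsplit]
    calc |∑ i ∈ B, (g (τ i) - f (m' (τ i)) (τ i)) * Δ i
        + ∑ i ∈ Bc, (g (τ i) - f (m' (τ i)) (τ i)) * Δ i|
        ≤ |∑ i ∈ B, (g (τ i) - f (m' (τ i)) (τ i)) * Δ i|
          + |∑ i ∈ Bc, (g (τ i) - f (m' (τ i)) (τ i)) * Δ i| := abs_add_le _ _
      _ ≤ ε' + ε' * G ⊤ := add_le_add hbad hgood
      _ = ε' * G ⊤ + ε' := by ring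
  -- Estimate of T2
  have hT2 : |T2| ≤ 2 * ε' := by
    set Sm : ℕ → Finset ℕ := fun m => (Finset.range P.n).filter (fun i => m' (τ i) = m)
      with hSmdef
    have hmap : ∀ i ∈ Finset.range P.n, m' (τ i) ∈ Finset.range (M+1) :=
      fun i hi => Finset.mem_range.mpr (Nat.lt_succ_of_le (hMi i hi))
    have hfib1 : ∑ m ∈ Finset.range (M+1), ∑ i ∈ Sm m, f (m' (τ i)) (τ i) * Δ i
        = ∑ i ∈ Finset.range P.n, f (m' (τ i)) (τ i) * Δ i :=
      Finset.sum_fiberwise_of_maps_to hmap _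
    set νv : ℕ → ℕ → ℝ := fun m i => nu (f m) G (P.x i) (P.x (i+1)) with hνdef
    have hhen : ∀ m, |∑ i ∈ Sm m, (f m (τ i) * Δ i - νv m i)| ≤ ε' / 2 ^ (m+1) := by
      intro m
      have hfine' : ∀ i ∈ Sm m, Set.Ioc (P.x i) (P.x (i+1)) ⊆ δI m (P.t (i+1)) := by
        intro i hi
        obtain ⟨hir, hmeq⟩ := Finset.mem_filter.mp hi
        refine Set.Subset.trans (hPf i (Finset.mem_range.mp hir)) ?_
        have := hδsub (τ i)
        rw [hmeq] at this
        exact this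
      exact henstock bot_le (hint m) (hδI m) (haccI m) P (Sm m)
        (Finset.filter_subset _ _) hfine'
    have hνmono : ∀ m₂ m₃ : ℕ, m₂ ≤ m₃ → ∀ i < P.n, νv m₂ i ≤ νv m₃ i := by
      intro m₂ m₃ hle i hi
      exact nu_mono (fun x => hfmono hle x) hGmono
        (exists_hasIntegral_sub ⟨A m₂, hint m₂⟩ bot_le (P.mono i hi) le_top)
        (exists_hasIntegral_sub ⟨A m₃, hint m₃⟩ bot_le (P.mono i hi) le_top) (P.mono i hi)
    have htelM : ∑ i ∈ Finset.range P.n, νv M i = A M - f M ⊥ * G ⊥ := by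
      have h1 := nu_telescope (f := f M) (G := G) ⟨A M, hint M⟩ P.x_zero P.x_last P.mono
      have h2 : nu (f M) G ⊥ ⊤ = A M - f M ⊥ * G ⊥ := by
        rw [nu, (hint M).intVal_eq bot_le]
      rw [h2] at h1
      exact h1
    have htel0 : ∑ i ∈ Finset.range P.n, νv m₀ i = A m₀ - f m₀ ⊥ * G ⊥ := by
      have h1 := nu_telescope (f := f m₀) (G := G) ⟨A m₀, hint m₀⟩ P.x_zero P.x_last P.mono
      have h2 : nu (f m₀) G ⊥ ⊤ = A m₀ - f m₀ ⊥ * G ⊥ := by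
        rw [nu, (hint m₀).intVal_eq bot_le]
      rw [h2] at h1
      exact h1
    have hfibM : ∑ m ∈ Finset.range (M+1), ∑ i ∈ Sm m, νv M i
        = ∑ i ∈ Finset.range P.n, νv M i := Finset.sum_fiberwise_of_maps_to hmap _
    have hfib0 : ∑ m ∈ Finset.range (M+1), ∑ i ∈ Sm m, νv m₀ i
        = ∑ i ∈ Finset.range P.n, νv m₀ i := Finset.sum_fiberwise_of_maps_to hmap _
    have hgeom := geom_sum_le_of_nonneg hε'.le (Finset.range (M+1))
    have hup : ∑ i ∈ Finset.range P.n, f (m' (τ i)) (τ i) * Δ i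
        ≤ A M - f M ⊥ * G ⊥ + ε' := by
      rw [← hfib1]
      have hstep : ∀ m ∈ Finset.range (M+1), ∑ i ∈ Sm m, f (m' (τ i)) (τ i) * Δ i
          ≤ ∑ i ∈ Sm m, νv M i + ε' / 2 ^ (m+1) := by
        intro m hm
        have hmM : m ≤ M := Nat.lt_succ_iff.mp (Finset.mem_range.mp hm)
        have hre : ∑ i ∈ Sm m, f (m' (τ i)) (τ i) * Δ i = ∑ i ∈ Sm m, f m (τ i) * Δ i :=
          Finset.sum_congr rfl (fun i hi => by rw [(Finset.mem_filter.mp hi).2])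
        rw [hre]
        have h1 := (abs_le.mp (hhen m)).2
        rw [Finset.sum_sub_distrib] at h1
        have h2 : ∑ i ∈ Sm m, νv m i ≤ ∑ i ∈ Sm m, νv M i :=
          Finset.sum_le_sum (fun i hi => hνmono m M hmM i
            (Finset.mem_range.mp (Finset.mem_filter.mp hi).1))
        linarith
      calc ∑ m ∈ Finset.range (M+1), ∑ i ∈ Sm m, f (m' (τ i)) (τ i) * Δ i
          ≤ ∑ m ∈ Finset.range (M+1), (∑ i ∈ Sm m, νv M i + ε' / 2 ^ (m+1)) :=
            Finset.sum_le_sum hstep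
        _ = ∑ m ∈ Finset.range (M+1), ∑ i ∈ Sm m, νv M i
            + ∑ m ∈ Finset.range (M+1), ε' / 2 ^ (m+1) := Finset.sum_add_distrib
        _ ≤ ∑ i ∈ Finset.range P.n, νv M i + ε' := by
            rw [hfibM]; linarith
        _ = A M - f M ⊥ * G ⊥ + ε' := by rw [htelM]
    have hlow : A m₀ - f m₀ ⊥ * G ⊥ - ε'
        ≤ ∑ i ∈ Finset.range P.n, f (m' (τ i)) (τ i) * Δ i := by
      rw [← hfib1]
      have hstep : ∀ m ∈ Finset.range (M+1),
          ∑ i ∈ Sm m, νv m₀ i - ε' / 2 ^ (m+1) ≤ ∑ i ∈ Sm m, f (m' (τ i)) (τ i) * Δ i := by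
        intro m hm
        by_cases hmm : m₀ ≤ m
        · have hre : ∑ i ∈ Sm m, f (m' (τ i)) (τ i) * Δ i = ∑ i ∈ Sm m, f m (τ i) * Δ i :=
            Finset.sum_congr rfl (fun i hi => by rw [(Finset.mem_filter.mp hi).2])
          rw [hre]
          have h1 := (abs_le.mp (hhen m)).1
          rw [Finset.sum_sub_distrib] at h1
          have h2 : ∑ i ∈ Sm m, νv m₀ i ≤ ∑ i ∈ Sm m, νv m i :=
            Finset.sum_le_sum (fun i hi => hνmono m₀ m hmm i
              (Finset.mem_range.mp (Finset.mem_filter.mp hi).1))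
          linarith
        · have hempty : Sm m = ∅ := by
            rw [hSmdef]
            apply Finset.filter_eq_empty_iff.mpr
            intro i _ heq
            exact hmm (heq ▸ hm'ge (τ i))
          rw [hempty]
          simp only [Finset.sum_empty]
          have : (0:ℝ) < ε' / 2 ^ (m+1) := by positivity
          linarith
      calc A m₀ - f m₀ ⊥ * G ⊥ - ε' = ∑ i ∈ Finset.range P.n, νv m₀ i - ε' := by rw [htel0]
        _ ≤ ∑ m ∈ Finset.range (M+1), ∑ i ∈ Sm m, νv m₀ i
            - ∑ m ∈ Finset.range (M+1), ε' / 2 ^ (m+1) := by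
            rw [hfib0]; linarith
        _ = ∑ m ∈ Finset.range (M+1), (∑ i ∈ Sm m, νv m₀ i - ε' / 2 ^ (m+1)) :=
            by rw [Finset.sum_sub_distrib]
        _ ≤ ∑ m ∈ Finset.range (M+1), ∑ i ∈ Sm m, f (m' (τ i)) (τ i) * Δ i :=
            Finset.sum_le_sum hstep
    have hhead1 : f (m' ⊥) ⊥ * G ⊥ ≤ f M ⊥ * G ⊥ :=
      mul_le_mul_of_nonneg_right (hfmono hMbot ⊥) (hGpos ⊥)
    have hhead2 : f m₀ ⊥ * G ⊥ ≤ f (m' ⊥) ⊥ * G ⊥ :=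
      mul_le_mul_of_nonneg_right (hfmono (hm'ge ⊥) ⊥) (hGpos ⊥)
    have hAM : |A M - L| < ε' := by
      have := hm₀ M hMm₀; rwa [Real.dist_eq] at this
    have hAm₀ : |A m₀ - L| < ε' := by
      have := hm₀ m₀ (le_refl _); rwa [Real.dist_eq] at this
    rw [hT2def, abs_le]
    constructor
    · linarith [neg_abs_le (A m₀ - L)]
    · linarith [le_abs_self (A M - L)]
  -- total
  have htotal : |riemannSum g G P - L| ≤ ε' * (2 * G ⊤ + 4) := by
    rw [hdecomp]
    calc |T0 + T1 + T2| ≤ |T0| + |T1| + |T2| := abs_add_three _ _ _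
      _ ≤ (ε' * G ⊤ + ε') + (ε' * G ⊤ + ε') + 2 * ε' := by linarith
      _ = ε' * (2 * G ⊤ + 4) := by ring
  have hfinal : ε' * (2 * G ⊤ + 4) < ε := by
    rw [hε'def]
    rw [div_mul_eq_mul_div, div_lt_iff₀ (by linarith)]
    nlinarith
  exact lt_of_le_of_lt htotal hfinal

end Main
theorem monotone_convergence {K : Type*} [LinearOrder K] [TopologicalSpace K]
    [OrderTopology K] [CompactSpace K] [BoundedOrder K] [MeasurableSpace K] [BorelSpace K]
    (G : K → ℝ) (hGmono : Monotone G) (hGpos : ∀ x : K, 0 ≤ G x) (hGam : Amenable G)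
    (μ : MeasureTheory.Measure K) [μ.Regular]
    (hμ : ∀ x : K, μ (Set.Icc ⊥ x) = ENNReal.ofReal (G x))
    (f : ℕ → K → ℝ) (A : ℕ → ℝ) (hint : ∀ m, HasIntegral (f m) G (⊥ : K) ⊤ (A m))
    (hmono : Monotone f ∨ Antitone f)
    (g : K → ℝ)
    (hconv : GNull μ {x : K | ¬ Filter.Tendsto (fun m => f m x) Filter.atTop (nhds (g x))})
    (L : ℝ) (hA : Filter.Tendsto A Filter.atTop (nhds L)) :
    HasIntegral g G (⊥ : K) ⊤ L := by
  rcases hmono with hm | hm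
  · exact mct_of_monotone G hGmono hGpos μ hμ f A hint hm g hconv L hA
  · have hint' : ∀ m, HasIntegral (fun x => - f m x) G (⊥ : K) ⊤ (- A m) :=
      fun m => (hint m).neg
    have hm' : Monotone (fun m => fun x => - f m x) := by
      intro m₂ m₃ hle x
      exact neg_le_neg (hm hle x)
    have hsetEq : {x : K | ¬ Filter.Tendsto (fun m => - f m x) Filter.atTop (nhds (- g x))}
        = {x : K | ¬ Filter.Tendsto (fun m => f m x) Filter.atTop (nhds (g x))} := by
      ext x
      simp only [Set.mem_setOf_eq]
      constructor
      · intro h1 h2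
        exact h1 h2.neg
      · intro h1 h2
        apply h1
        have := h2.neg
        simpa using this
    have hconv' : GNull μ
        {x : K | ¬ Filter.Tendsto (fun m => - f m x) Filter.atTop (nhds (- g x))} := by
      rw [hsetEq]
      exact hconv
    have h1 := mct_of_monotone G hGmono hGpos μ hμ (fun m x => - f m x) (fun m => - A m)
      hint' hm' (fun x => - g x) hconv' (- L) hA.neg
    have h2 := h1.neg
    have he : (fun x : K => - - g x) = g := by funext x; ring
    rw [he, neg_neg] at h2
    exact h2
end

section
/- Characterization of Lebesgue integrability via the compact-line Kurzweil–Stieltjes integral: let K be a compact line, G : K → ℝ a nondecreasing, positive, amenable function, and μ_G the induced Radon measure. A Borel-measurable function f : K → ℝ is Lebesgue μ_G-integrable if and only if both f and |f| are G-integrable, and in that case ∫_K f dG = ∫_K f dμ_G. -/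
open Set Filter MeasureTheory

set_option linter.unusedSectionVars false

section KSAux

open MeasureTheory

variable {K : Type*} [LinearOrder K] [TopologicalSpace K] [OrderTopology K]

lemma ks_exists_ordConnected_open_nhd {U : Set K} (hU : IsOpen U) {t : K} (ht : t ∈ U) :
    ∃ V : Set K, IsOpen V ∧ V.OrdConnected ∧ t ∈ V ∧ V ⊆ U := by
  by_cases hl : ∃ l, l < t
  · by_cases hu : ∃ u, t < u
    · obtain ⟨l, u, htlu, hsub⟩ := (mem_nhds_iff_exists_Ioo_subset' hl hu).1 (hU.mem_nhds ht)
      exact ⟨Set.Ioo l u, isOpen_Ioo, Set.ordConnected_Ioo, htlu, hsub⟩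
    · have hmax : ∀ y : K, y ≤ t := fun y => not_lt.1 fun h => hu ⟨y, h⟩
      obtain ⟨l, hlt, hsub⟩ := exists_Ioc_subset_of_mem_nhds (hU.mem_nhds ht) hl
      exact ⟨Set.Ioi l, isOpen_Ioi, Set.ordConnected_Ioi, hlt, fun y hy => hsub ⟨hy, hmax y⟩⟩
  · by_cases hu : ∃ u, t < u
    · have hmin : ∀ y : K, t ≤ y := fun y => not_lt.1 fun h => hl ⟨y, h⟩
      obtain ⟨u, htu, hsub⟩ := exists_Ico_subset_of_mem_nhds (hU.mem_nhds ht) hu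
      exact ⟨Set.Iio u, isOpen_Iio, Set.ordConnected_Iio, htu, fun y hy => hsub ⟨hmin y, hy⟩⟩
    · have hall : ∀ y : K, y = t := fun y =>
        le_antisymm (not_lt.1 fun h => hu ⟨y, h⟩) (not_lt.1 fun h => hl ⟨y, h⟩)
      exact ⟨Set.univ, isOpen_univ, Set.ordConnected_univ, trivial, fun y _ => (hall y) ▸ ht⟩

variable [BoundedOrder K]

lemma ks_isGauge_iff {δ : K → Set K} :
    IsGauge K (⊥ : K) ⊤ δ ↔ ∀ x : K, x ∈ δ x ∧ (δ x).OrdConnected ∧ IsOpen (δ x) := by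
  constructor
  · intro h x
    obtain ⟨hm, hc, U, hUo, hUe⟩ := h x ⟨bot_le, le_top⟩
    refine ⟨hm, hc, ?_⟩
    rw [hUe, Set.Icc_bot_top, Set.inter_univ]
    exact hUo
  · intro h x _
    exact ⟨(h x).1, (h x).2.1, δ x, (h x).2.2, by rw [Set.Icc_bot_top, Set.inter_univ]⟩

lemma ks_isGauge_inter {δ₁ δ₂ : K → Set K} (h₁ : IsGauge K (⊥ : K) ⊤ δ₁)
    (h₂ : IsGauge K (⊥ : K) ⊤ δ₂) : IsGauge K (⊥ : K) ⊤ (fun x => δ₁ x ∩ δ₂ x) := by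
  rw [ks_isGauge_iff] at h₁ h₂ ⊢
  exact fun x => ⟨⟨(h₁ x).1, (h₂ x).1⟩, (h₁ x).2.1.inter (h₂ x).2.1,
    (h₁ x).2.2.inter (h₂ x).2.2⟩

lemma ks_extend {δ : K → Set K} {y c : K} (hyc : y ≤ c)
    (P : TaggedPartition K ⊥ y) (hP : P.IsFine δ) {τ : K} (hτ : τ ∈ Set.Icc y c)
    (hsub : Set.Ioc y c ⊆ δ τ) : ∃ Q : TaggedPartition K ⊥ c, Q.IsFine δ := by
  refine ⟨⟨P.n + 1, fun i => if i ≤ P.n then P.x i else c,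
      fun i => if i ≤ P.n then P.t i else τ, ?_, ?_, ?_, ?_⟩, ?_⟩
  · simp [P.x_zero]
  · simp
  · intro i hi
    rcases lt_or_eq_of_le (Nat.lt_succ_iff.1 hi) with h | h
    · simp only [if_pos h.le, if_pos (Nat.succ_le_of_lt h)]
      exact P.mono i h
    · subst h
      simp only [if_pos le_rfl, if_neg (by omega : ¬ P.n + 1 ≤ P.n), P.x_last]
      exact hyc
  · intro i hi
    rcases lt_or_eq_of_le (Nat.lt_succ_iff.1 hi) with h | h
    · simp only [if_pos h.le, if_pos (Nat.succ_le_of_lt h)]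
      exact P.tag_mem i h
    · subst h
      simp only [if_pos le_rfl, if_neg (by omega : ¬ P.n + 1 ≤ P.n), P.x_last]
      exact hτ
  · intro i hi
    rcases lt_or_eq_of_le (Nat.lt_succ_iff.1 hi) with h | h
    · simp only [if_pos h.le, if_pos (Nat.succ_le_of_lt h)]
      exact hP i h
    · subst h
      simp only [if_pos le_rfl, if_neg (by omega : ¬ P.n + 1 ≤ P.n), P.x_last]
      exact hsub

variable [CompactSpace K]

lemma ks_cousin {δ : K → Set K} (hδ : IsGauge K (⊥ : K) ⊤ δ) :
    ∃ P : TaggedPartition K ⊥ ⊤, P.IsFine δ := by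
  rw [ks_isGauge_iff] at hδ
  set A : Set K := {y | ∃ P : TaggedPartition K ⊥ y, P.IsFine δ} with hA
  have hbot : (⊥ : K) ∈ A :=
    ⟨⟨0, fun _ => ⊥, fun _ => ⊥, rfl, rfl, fun i hi => absurd hi (Nat.not_lt_zero i),
      fun i hi => absurd hi (Nat.not_lt_zero i)⟩, fun i hi => absurd hi (Nat.not_lt_zero i)⟩
  obtain ⟨c, hc_cl, hc_ub⟩ :=
    (isClosed_closure (s := A)).isCompact.exists_isGreatest ⟨⊥, subset_closure hbot⟩
  obtain ⟨hcδ, hcconn, hcopen⟩ := hδ c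
  obtain ⟨yy, hyδ, hyA⟩ := _root_.mem_closure_iff.1 hc_cl (δ c) hcopen hcδ
  have hyc : yy ≤ c := hc_ub (subset_closure hyA)
  obtain ⟨P₀, hP₀⟩ := hyA
  have hcA : c ∈ A := ks_extend hyc P₀ hP₀ (τ := c) ⟨hyc, le_rfl⟩
    (fun s hs => hcconn.out hyδ hcδ ⟨hs.1.le, hs.2⟩)
  rcases eq_or_lt_of_le (le_top : c ≤ ⊤) with htop | hlt
  · exact htop ▸ hcA
  · exfalso
    by_cases hz : ∃ z ∈ δ c, c < z
    · obtain ⟨z, hzδ, hcz⟩ := hz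
      obtain ⟨Q, hQ⟩ := hcA
      have hzA : z ∈ A := ks_extend hcz.le Q hQ (τ := c) ⟨le_rfl, hcz.le⟩
        (fun s hs => hcconn.out hcδ hzδ ⟨hs.1.le, hs.2⟩)
      exact absurd (hc_ub (subset_closure hzA)) (not_le.2 hcz)
    · have hsub : δ c ⊆ Set.Iic c := fun s hs => not_lt.1 fun h => hz ⟨s, hs, h⟩
      have hIic : Set.Iic c ∈ nhds c := Filter.mem_of_superset (hcopen.mem_nhds hcδ) hsub
      obtain ⟨u, hcu, hIco⟩ := exists_Ico_subset_of_mem_nhds hIic ⟨⊤, hlt⟩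
      have hIoc : Set.Ioc c u ⊆ δ u := by
        intro s hs
        rcases eq_or_lt_of_le hs.2 with h | h
        · exact h ▸ (hδ u).1
        · exact absurd (hIco ⟨hs.1.le, h⟩) (not_le.2 hs.1)
      obtain ⟨Q, hQ⟩ := hcA
      have huA : u ∈ A := ks_extend hcu.le Q hQ (τ := u) ⟨hcu.le, le_rfl⟩ hIoc
      exact absurd (hc_ub (subset_closure huA)) (not_le.2 hcu)

lemma ks_sum_mono {G u v : K → ℝ} (hGmono : Monotone G) (hGpos : ∀ x, 0 ≤ G x)
    (huv : ∀ x, u x ≤ v x) (P : TaggedPartition K ⊥ ⊤) :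
    riemannSum u G P ≤ riemannSum v G P := by
  unfold riemannSum
  refine add_le_add (mul_le_mul_of_nonneg_right (huv ⊥) (hGpos ⊥)) ?_
  refine Finset.sum_le_sum fun i hi => ?_
  exact mul_le_mul_of_nonneg_right (huv _)
    (sub_nonneg.2 (hGmono (P.mono i (Finset.mem_range.1 hi))))

lemma ks_hasIntegral_mono {G u v : K → ℝ} (hGmono : Monotone G) (hGpos : ∀ x, 0 ≤ G x)
    {U V : ℝ} (hu : HasIntegral u G ⊥ ⊤ U) (hv : HasIntegral v G ⊥ ⊤ V)
    (huv : ∀ x, u x ≤ v x) : U ≤ V := by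
  by_contra hcon
  push_neg at hcon
  have hεpos : 0 < (U - V) / 2 := by linarith
  obtain ⟨δ₁, hδ₁, h₁⟩ := hu _ hεpos
  obtain ⟨δ₂, hδ₂, h₂⟩ := hv _ hεpos
  obtain ⟨P, hP⟩ := ks_cousin (ks_isGauge_inter hδ₁ hδ₂)
  have hP₁ : P.IsFine δ₁ := fun i hi => (hP i hi).trans Set.inter_subset_left
  have hP₂ : P.IsFine δ₂ := fun i hi => (hP i hi).trans Set.inter_subset_right
  have hS := ks_sum_mono hGmono hGpos huv P
  have e₁ := abs_lt.1 (h₁ P hP₁)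
  have e₂ := abs_lt.1 (h₂ P hP₂)
  linarith [e₁.1, e₁.2, e₂.1, e₂.2]

lemma ks_hasIntegral_unique {G u : K → ℝ} (hGmono : Monotone G) (hGpos : ∀ x, 0 ≤ G x)
    {U V : ℝ} (hu : HasIntegral u G ⊥ ⊤ U) (hv : HasIntegral u G ⊥ ⊤ V) : U = V :=
  le_antisymm (ks_hasIntegral_mono hGmono hGpos hu hv fun _ => le_rfl)
    (ks_hasIntegral_mono hGmono hGpos hv hu fun _ => le_rfl)

variable [MeasurableSpace K] [BorelSpace K]

lemma ks_measure_Ioc {G : K → ℝ} (hGpos : ∀ x, 0 ≤ G x)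
    {μ : Measure K} (hμ : ∀ x : K, μ (Set.Icc ⊥ x) = ENNReal.ofReal (G x))
    {a b : K} (hab : a ≤ b) : μ (Set.Ioc a b) = ENNReal.ofReal (G b - G a) := by
  have hdisj : Disjoint (Set.Icc (⊥ : K) a) (Set.Ioc a b) := by
    rw [Set.disjoint_left]
    rintro s ⟨_, hsa⟩ ⟨has, _⟩
    exact absurd hsa (not_le.2 has)
  have hu := measure_union (μ := μ) hdisj measurableSet_Ioc
  rw [Set.Icc_union_Ioc_eq_Icc bot_le hab, hμ, hμ] at hu
  rw [ENNReal.ofReal_sub _ (hGpos a)]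
  exact ENNReal.eq_sub_of_add_eq ENNReal.ofReal_ne_top (by rw [add_comm]; exact hu.symm)

lemma ks_toReal_Ioc {G : K → ℝ} (hGmono : Monotone G) (hGpos : ∀ x, 0 ≤ G x)
    {μ : Measure K} (hμ : ∀ x : K, μ (Set.Icc ⊥ x) = ENNReal.ofReal (G x))
    {a b : K} (hab : a ≤ b) : (μ (Set.Ioc a b)).toReal = G b - G a := by
  rw [ks_measure_Ioc hGpos hμ hab, ENNReal.toReal_ofReal (sub_nonneg.2 (hGmono hab))]

lemma ks_toReal_singleton {G : K → ℝ} (hGpos : ∀ x, 0 ≤ G x)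
    {μ : Measure K} (hμ : ∀ x : K, μ (Set.Icc ⊥ x) = ENNReal.ofReal (G x)) :
    (μ ({(⊥ : K)} : Set K)).toReal = G ⊥ := by
  rw [← Set.Icc_self, hμ, ENNReal.toReal_ofReal (hGpos ⊥)]

lemma ks_integral_split {μ : Measure K} {φ : K → ℝ} (hφ : Integrable φ μ)
    (x : ℕ → K) (hx0 : x 0 = ⊥) (n : ℕ) (hmono : ∀ i < n, x i ≤ x (i + 1)) :
    ∫ s in Set.Icc ⊥ (x n), φ s ∂μ
      = (∫ s in ({(⊥ : K)} : Set K), φ s ∂μ)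
        + ∑ i ∈ Finset.range n, ∫ s in Set.Ioc (x i) (x (i + 1)), φ s ∂μ := by
  induction n with
  | zero => simp [hx0, Set.Icc_self]
  | succ n ih =>
    have hdisj : Disjoint (Set.Icc (⊥ : K) (x n)) (Set.Ioc (x n) (x (n + 1))) := by
      rw [Set.disjoint_left]
      rintro s ⟨_, hsa⟩ ⟨has, _⟩
      exact absurd hsa (not_le.2 has)
    rw [← Set.Icc_union_Ioc_eq_Icc bot_le (hmono n (Nat.lt_succ_self n)),
      setIntegral_union hdisj measurableSet_Ioc hφ.integrableOn hφ.integrableOn,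
      ih (fun i hi => hmono i (Nat.lt_succ_of_lt hi)), Finset.sum_range_succ]
    ring

lemma ks_const_mul_le_setIntegral {μ : Measure K} [IsFiniteMeasure μ] {g : K → EReal}
    (hg : Integrable (fun x => (g x).toReal) μ) (hgt : ∀ᵐ s ∂μ, g s < ⊤)
    {c : ℝ} {J : Set K} (hJ : MeasurableSet J) (hc : ∀ s ∈ J, (c : EReal) < g s) :
    c * (μ J).toReal ≤ ∫ s in J, (g s).toReal ∂μ := by
  have h1 : ∫ _ in J, c ∂μ = (μ J).toReal * c := by rw [setIntegral_const, smul_eq_mul]; rfl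
  rw [mul_comm, ← h1]
  refine integral_mono_ae (integrable_const c) hg.integrableOn ?_
  filter_upwards [ae_restrict_mem hJ, ae_restrict_of_ae hgt] with s hsJ hstop
  have h := hc s hsJ
  have hne1 : g s ≠ ⊤ := hstop.ne
  have hne2 : g s ≠ ⊥ := ((EReal.bot_lt_coe c).trans h).ne'
  have hcoe : ((g s).toReal : EReal) = g s := EReal.coe_toReal hne1 hne2
  rw [← hcoe] at h
  exact_mod_cast h.le

lemma ks_setIntegral_le_const_mul {μ : Measure K} [IsFiniteMeasure μ] {g : K → EReal}
    (hg : Integrable (fun x => (g x).toReal) μ) (hgt : ∀ᵐ s ∂μ, ⊥ < g s)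
    {c : ℝ} {J : Set K} (hJ : MeasurableSet J) (hc : ∀ s ∈ J, g s < (c : EReal)) :
    ∫ s in J, (g s).toReal ∂μ ≤ c * (μ J).toReal := by
  have h1 : ∫ _ in J, c ∂μ = (μ J).toReal * c := by rw [setIntegral_const, smul_eq_mul]; rfl
  rw [mul_comm, ← h1]
  refine integral_mono_ae hg.integrableOn (integrable_const c) ?_
  filter_upwards [ae_restrict_mem hJ, ae_restrict_of_ae hgt] with s hsJ hsbot
  have h := hc s hsJ
  have hne1 : g s ≠ ⊤ := (h.trans (EReal.coe_lt_top c)).ne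
  have hne2 : g s ≠ ⊥ := hsbot.ne'
  have hcoe : ((g s).toReal : EReal) = g s := EReal.coe_toReal hne1 hne2
  rw [← hcoe] at h
  exact_mod_cast h.le

lemma ks_forward {G : K → ℝ} (hGmono : Monotone G) (hGpos : ∀ x, 0 ≤ G x)
    {μ : Measure K} [IsFiniteMeasure μ] [μ.WeaklyRegular]
    (hμ : ∀ x : K, μ (Set.Icc ⊥ x) = ENNReal.ofReal (G x))
    {f : K → ℝ} (hfi : Integrable f μ) :
    HasIntegral f G (⊥ : K) ⊤ (∫ x, f x ∂μ) := by
  intro ε hε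
  obtain ⟨g, hfg, hgl, hgi, hgt, hgint⟩ :=
    exists_lt_lowerSemicontinuous_integral_lt (μ := μ) f hfi hε
  obtain ⟨h, hhf, hhu, hhi, hhb, hhint⟩ :=
    exists_upperSemicontinuous_lt_integral_gt (μ := μ) f hfi hε
  have hUopen : ∀ t : K,
      IsOpen ({s | (f t : EReal) < g s} ∩ {s | h s < (f t : EReal)}) := fun t =>
    (hgl.isOpen_preimage _).inter (hhu.isOpen_preimage _)
  have hUmem : ∀ t : K, t ∈ {s | (f t : EReal) < g s} ∩ {s | h s < (f t : EReal)} :=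
    fun t => ⟨hfg t, hhf t⟩
  choose V hVo hVc hVm hVs using fun t => ks_exists_ordConnected_open_nhd (hUopen t) (hUmem t)
  refine ⟨V, ks_isGauge_iff.2 fun x => ⟨hVm x, hVc x, hVo x⟩, ?_⟩
  intro P hP
  have hSum : riemannSum f G P = f ⊥ * (μ ({(⊥ : K)} : Set K)).toReal
      + ∑ i ∈ Finset.range P.n, f (P.t (i + 1)) * (μ (Set.Ioc (P.x i) (P.x (i + 1)))).toReal := by
    unfold riemannSum
    rw [ks_toReal_singleton hGpos hμ]
    congr 1
    refine Finset.sum_congr rfl fun i hi => ?_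
    rw [ks_toReal_Ioc hGmono hGpos hμ (P.mono i (Finset.mem_range.1 hi))]
  have hdecg := ks_integral_split hgi P.x P.x_zero P.n P.mono
  have hdech := ks_integral_split hhi P.x P.x_zero P.n P.mono
  rw [P.x_last, Set.Icc_bot_top, setIntegral_univ] at hdecg hdech
  have hup : riemannSum f G P ≤ ∫ x, (g x).toReal ∂μ := by
    rw [hSum, hdecg]
    refine add_le_add ?_ (Finset.sum_le_sum fun i hi => ?_)
    · refine ks_const_mul_le_setIntegral hgi hgt (measurableSet_singleton _) fun s hs => ?_
      rw [Set.mem_singleton_iff] at hs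
      subst hs
      exact hfg _
    · refine ks_const_mul_le_setIntegral hgi hgt measurableSet_Ioc fun s hs => ?_
      exact (hVs _ (hP i (Finset.mem_range.1 hi) hs)).1
  have hlow : ∫ x, (h x).toReal ∂μ ≤ riemannSum f G P := by
    rw [hSum, hdech]
    refine add_le_add ?_ (Finset.sum_le_sum fun i hi => ?_)
    · refine ks_setIntegral_le_const_mul hhi hhb (measurableSet_singleton _) fun s hs => ?_
      rw [Set.mem_singleton_iff] at hs
      subst hs
      exact hhf _
    · refine ks_setIntegral_le_const_mul hhi hhb measurableSet_Ioc fun s hs => ?_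
      exact (hVs _ (hP i (Finset.mem_range.1 hi) hs)).2
  rw [abs_lt]
  constructor <;> linarith

end KSAux

open scoped ENNReal NNReal

theorem lebesgue_integrable_iff_absolutely_G_integrable {K : Type*} [LinearOrder K]
    [TopologicalSpace K] [OrderTopology K] [CompactSpace K] [BoundedOrder K]
    [MeasurableSpace K] [BorelSpace K]
    (G : K → ℝ) (hGmono : Monotone G) (hGpos : ∀ x : K, 0 ≤ G x) (hGam : Amenable G)
    (μ : MeasureTheory.Measure K) [μ.Regular]
    (hμ : ∀ x : K, μ (Set.Icc ⊥ x) = ENNReal.ofReal (G x))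
    (f : K → ℝ) (hf : Measurable f) :
    (MeasureTheory.Integrable f μ ↔
      (∃ A, HasIntegral f G (⊥ : K) ⊤ A) ∧
      (∃ B, HasIntegral (fun x => |f x|) G (⊥ : K) ⊤ B)) ∧
    ∀ A, HasIntegral f G (⊥ : K) ⊤ A → MeasureTheory.Integrable f μ →
      A = ∫ x, f x ∂μ := by
  have hfin : MeasureTheory.IsFiniteMeasure μ :=
    ⟨by rw [← Set.Icc_bot_top, hμ]; exact ENNReal.ofReal_lt_top⟩
  have hforward : ∀ φ : K → ℝ, MeasureTheory.Integrable φ μ →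
      HasIntegral φ G (⊥ : K) ⊤ (∫ x, φ x ∂μ) :=
    fun φ hφ => ks_forward hGmono hGpos hμ hφ
  refine ⟨⟨fun hfi => ⟨⟨_, hforward f hfi⟩, ⟨_, hforward _ hfi.abs⟩⟩, ?_⟩, fun A hA hfi =>
    ks_hasIntegral_unique hGmono hGpos hA (hforward f hfi)⟩
  rintro ⟨⟨A, hA⟩, ⟨B, hB⟩⟩
  have key : ∀ n : ℕ, ∫ x, min |f x| (n : ℝ) ∂μ ≤ B := by
    intro n
    have hmeas : Measurable fun x => min |f x| (n : ℝ) := hf.abs.min measurable_const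
    have hint : MeasureTheory.Integrable (fun x => min |f x| (n : ℝ)) μ := by
      refine (MeasureTheory.integrable_const (n : ℝ)).mono' hmeas.aestronglyMeasurable ?_
      filter_upwards with x
      rw [Real.norm_eq_abs, abs_of_nonneg (le_min (abs_nonneg _) (Nat.cast_nonneg n))]
      exact min_le_right _ _
    exact ks_hasIntegral_mono hGmono hGpos (hforward _ hint) hB fun x => min_le_left _ _
  have hint2 : ∀ n : ℕ, MeasureTheory.Integrable (fun x => min |f x| (n : ℝ)) μ := by
    intro n
    refine (MeasureTheory.integrable_const (n : ℝ)).mono'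
      ((hf.abs.min measurable_const).aestronglyMeasurable) ?_
    filter_upwards with x
    rw [Real.norm_eq_abs, abs_of_nonneg (le_min (abs_nonneg _) (Nat.cast_nonneg n))]
    exact min_le_right _ _
  refine ⟨hf.aestronglyMeasurable, ?_⟩
  have hpt : ∀ x : K, (‖f x‖₊ : ℝ≥0∞) = ⨆ n : ℕ, min (ENNReal.ofReal |f x|) (n : ℝ≥0∞) := by
    intro x
    rw [← enorm_eq_nnnorm, Real.enorm_eq_ofReal_abs]
    refine le_antisymm ?_ (iSup_le fun n => min_le_left _ _)
    obtain ⟨n, hn⟩ := ENNReal.exists_nat_gt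
      (show ENNReal.ofReal |f x| ≠ ⊤ from ENNReal.ofReal_ne_top)
    exact le_iSup_of_le n (le_min le_rfl hn.le)
  have hmono2 : Monotone fun (n : ℕ) => fun (x : K) => min (ENNReal.ofReal |f x|) (n : ℝ≥0∞) :=
    fun m n hmn x => min_le_min le_rfl (by exact_mod_cast Nat.cast_le.2 hmn)
  have hper : ∀ n : ℕ, ∫⁻ x, min (ENNReal.ofReal |f x|) (n : ℝ≥0∞) ∂μ ≤ ENNReal.ofReal B := by
    intro n
    have heq : ∫⁻ x, min (ENNReal.ofReal |f x|) (n : ℝ≥0∞) ∂μ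
        = ENNReal.ofReal (∫ x, min |f x| (n : ℝ) ∂μ) := by
      rw [MeasureTheory.ofReal_integral_eq_lintegral_ofReal (hint2 n)
        (Filter.Eventually.of_forall fun x => le_min (abs_nonneg _) (Nat.cast_nonneg n))]
      refine MeasureTheory.lintegral_congr fun x => ?_
      rw [← ENNReal.ofReal_natCast n,
        ← Monotone.map_min (fun a b hab => ENNReal.ofReal_le_ofReal hab)]
    rw [heq]
    exact ENNReal.ofReal_le_ofReal (key n)
  have hlt : ∫⁻ x, (‖f x‖₊ : ℝ≥0∞) ∂μ ≤ ENNReal.ofReal B := by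
    calc ∫⁻ x, (‖f x‖₊ : ℝ≥0∞) ∂μ
        = ∫⁻ x, ⨆ n : ℕ, min (ENNReal.ofReal |f x|) (n : ℝ≥0∞) ∂μ :=
          MeasureTheory.lintegral_congr hpt
      _ = ⨆ n : ℕ, ∫⁻ x, min (ENNReal.ofReal |f x|) (n : ℝ≥0∞) ∂μ :=
          MeasureTheory.lintegral_iSup
            (fun n => (hf.abs.ennreal_ofReal).min measurable_const) hmono2
      _ ≤ ENNReal.ofReal B := iSup_le hper
  exact lt_of_le_of_lt hlt ENNReal.ofReal_lt_top
end
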